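/- arXiv:1612.01205 — 4 statements merged into one kernel-verified Lean document; each statement's English description precedes it below -/
import Mathlib

section
/- (MSE bound for the SWITCH estimator.) Fix a reward kernel D ∈ R(σ,Rmax) with mean reward r*(x,a), a measurable reward model r̂ : X×A → ℝ with 0 ≤ r̂(x,a) ≤ Rmax(x,a) for all (x,a), and a threshold τ > 0; write ε(x,a) = r̂(x,a) − r*(x,a). Then the mean squared error of the SWITCH estimator on n i.i.d. samples from P_μ^D satisfies E[(v̂_SWITCH − v^π(D))²] ≤ (2/n)·( E_μ[(σ² + Rmax²)·ρ²·1(ρ ≤ τ)] + E_π[Rmax²·1(ρ > τ)] ) + ( E_π[ε·1(ρ > τ)] )². -/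
open MeasureTheory ProbabilityTheory Real
open scoped ENNReal BigOperators Classical

/-- A policy assigns to each context a probability mass function over actions. -/
structure Policy (X A : Type*) [MeasurableSpace X] [Fintype A] where
  prob : X → A → ℝ
  nonneg : ∀ x a, 0 ≤ prob x a
  sum_one : ∀ x, ∑ a, prob x a = 1
  meas : ∀ a, Measurable fun x => prob x a

variable {X A : Type*} [MeasurableSpace X] [Fintype A] [Nonempty A]
  [MeasurableSpace A] [MeasurableSingletonClass A]

/-- Importance weight ρ(x,a) = π(a|x)/μ(a|x). -/
noncomputable def impW (μp πp : Policy X A) (p : X × A) : ℝ :=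
  πp.prob p.1 p.2 / μp.prob p.1 p.2

/-- E_μ[f] : expectation of f(x,a) for x ∼ λ, a ∼ μ(·|x). -/
noncomputable def Emu (lam : Measure X) (μp : Policy X A) (f : X × A → ℝ) : ℝ :=
  ∫ x, ∑ a, μp.prob x a * f (x, a) ∂lam

/-- The distribution P_μ of (x,a) with x ∼ λ, a ∼ μ(·|x). -/
noncomputable def Policy.joint (lam : Measure X) (μp : Policy X A) : Measure (X × A) :=
  lam.bind fun x => Measure.sum fun a : A => ENNReal.ofReal (μp.prob x a) • Measure.dirac (x, a)

/-- Mean reward r*(x,a) of a reward kernel. -/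
noncomputable def rstar (D : Kernel (X × A) ℝ) (p : X × A) : ℝ := ∫ r, r ∂(D p)

/-- The value of the target policy π. -/
noncomputable def vpi (lam : Measure X) (πp : Policy X A) (D : Kernel (X × A) ℝ) : ℝ :=
  ∫ x, ∑ a, πp.prob x a * rstar D (x, a) ∂lam

/-- The joint distribution P_μ^D of ((x,a),r): x ∼ λ, a ∼ μ(·|x), r ∼ D(·|x,a). -/
noncomputable def sampleMeasure (lam : Measure X) (μp : Policy X A) (D : Kernel (X × A) ℝ) :
    Measure ((X × A) × ℝ) :=
  (Policy.joint lam μp).bind fun p => (D p).map fun r => (p, r)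

/-- The class R(σ,Rmax) of reward kernels: Markov kernels with finite second moments such
that P_μ-a.s. 0 ≤ r*(x,a) ≤ Rmax(x,a) and Var(r|x,a) ≤ σ(x,a)². -/
def InRewardClass (lam : Measure X) (μp : Policy X A) (σf Rmax : X × A → ℝ)
    (D : Kernel (X × A) ℝ) : Prop :=
  IsMarkovKernel D ∧ (∀ p, Integrable (fun r => r ^ 2) (D p)) ∧
    (∀ᵐ p ∂Policy.joint lam μp,
      0 ≤ rstar D p ∧ rstar D p ≤ Rmax p ∧ variance id (D p) ≤ σf p ^ 2)

/-- Minimax risk of off-policy evaluation from n i.i.d. samples. -/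
noncomputable def minimaxRisk (lam : Measure X) (μp πp : Policy X A)
    (σf Rmax : X × A → ℝ) (n : ℕ) : ℝ≥0∞ :=
  ⨅ (vhat : (Fin n → (X × A) × ℝ) → ℝ) (_ : Measurable vhat),
    ⨆ (D : Kernel (X × A) ℝ) (_ : InRewardClass lam μp σf Rmax D),
      ∫⁻ ω, ENNReal.ofReal ((vhat ω - vpi lam πp D) ^ 2)
        ∂(Measure.pi fun _ : Fin n => sampleMeasure lam μp D)

/-- E_π[f] : expectation of f(x,a) for x ∼ λ, a ∼ π(·|x). -/
noncomputable def Epi (lam : Measure X) (πp : Policy X A) (f : X × A → ℝ) : ℝ :=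
  ∫ x, ∑ a, πp.prob x a * f (x, a) ∂lam

/-- The SWITCH estimator with threshold τ and reward model r̂ on n samples. -/
noncomputable def switchEst (μp πp : Policy X A) (rhat : X × A → ℝ) (τ : ℝ) (n : ℕ)
    (ω : Fin n → (X × A) × ℝ) : ℝ :=
  (1 / n : ℝ) * ∑ i, (ω i).2 * impW μp πp (ω i).1 *
      (if impW μp πp (ω i).1 ≤ τ then 1 else 0)
    + (1 / n : ℝ) * ∑ i, ∑ a, rhat ((ω i).1.1, a) * πp.prob (ω i).1.1 a *
      (if τ < impW μp πp ((ω i).1.1, a) then 1 else 0)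


/-! ### Auxiliary lemmas for the SWITCH MSE bound -/

section PiLemmas
variable {E : Type*} [MeasureSpace E] [IsProbabilityMeasure (volume : Measure E)] {n : ℕ}

theorem pi_integrable_single (i : Fin n) (f : E → ℝ) (hf : Integrable f) :
    Integrable (fun ω : Fin n → E => f (ω i)) := by
  have key : (fun ω : Fin n → E => f (ω i))
      = fun ω : Fin n → E => ∏ k, (if k = i then f else fun _ => (1:ℝ)) (ω k) := by
    funext ω
    rw [Finset.prod_eq_single i (fun b _ hb => by simp [hb]) (by simp)]
    simp
  rw [key]
  exact Integrable.fintype_prod (fun k => by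
    by_cases h : k = i
    · simpa [h] using hf
    · simp only [if_neg h]; exact integrable_const (1:ℝ))

theorem pi_integral_single (i : Fin n) (f : E → ℝ) :
    ∫ ω : Fin n → E, f (ω i) = ∫ x, f x := by
  have key : (fun ω : Fin n → E => f (ω i))
      = fun ω : Fin n → E => ∏ k, (if k = i then f else fun _ => (1:ℝ)) (ω k) := by
    funext ω
    rw [Finset.prod_eq_single i (fun b _ hb => by simp [hb]) (by simp)]
    simp
  rw [key, integral_fintype_prod_volume_eq_prod]
  rw [Finset.prod_eq_single i (fun b _ hb => by simp [hb]) (by simp)]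
  simp

theorem pi_pair_key (i j : Fin n) (hij : i ≠ j) (f g : E → ℝ) (ω : Fin n → E) :
    f (ω i) * g (ω j)
      = ∏ k, (if k = i then f else if k = j then g else fun _ => (1:ℝ)) (ω k) := by
  rw [← Finset.mul_prod_erase Finset.univ _ (Finset.mem_univ i)]
  rw [← Finset.mul_prod_erase _ _ (Finset.mem_erase.2 ⟨hij.symm, Finset.mem_univ j⟩)]
  rw [Finset.prod_eq_one (fun k hk => by
    have h1 := (Finset.mem_erase.1 hk).1
    have h2 := (Finset.mem_erase.1 (Finset.mem_erase.1 hk).2).1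
    simp [h1, h2])]
  simp [hij.symm]

theorem pi_integrable_pair (i j : Fin n) (hij : i ≠ j) (f g : E → ℝ)
    (hf : Integrable f) (hg : Integrable g) :
    Integrable (fun ω : Fin n → E => f (ω i) * g (ω j)) := by
  simp_rw [pi_pair_key i j hij f g]
  exact Integrable.fintype_prod (fun k => by
    by_cases h1 : k = i
    · simpa [h1] using hf
    · by_cases h2 : k = j
      · simp only [if_neg h1, if_pos h2]; exact hg
      · simp only [if_neg h1, if_neg h2]; exact integrable_const (1:ℝ))

theorem pi_integral_pair (i j : Fin n) (hij : i ≠ j) (f g : E → ℝ) :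
    ∫ ω : Fin n → E, f (ω i) * g (ω j) = (∫ x, f x) * ∫ x, g x := by
  simp_rw [pi_pair_key i j hij f g]
  rw [integral_fintype_prod_volume_eq_prod]
  rw [← Finset.mul_prod_erase Finset.univ _ (Finset.mem_univ i)]
  rw [← Finset.mul_prod_erase _ _ (Finset.mem_erase.2 ⟨hij.symm, Finset.mem_univ j⟩)]
  rw [Finset.prod_eq_one (fun k hk => by
    have h1 := (Finset.mem_erase.1 hk).1
    have h2 := (Finset.mem_erase.1 (Finset.mem_erase.1 hk).2).1
    simp [h1, h2])]
  simp [hij.symm]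

theorem pi_mse (hn : 0 < n) (h : E → ℝ) (hh : Integrable h)
    (hh2 : Integrable (fun x => h x * h x)) (v : ℝ) :
    Integrable (fun ω : Fin n → E => ((1/n : ℝ) * ∑ i, h (ω i) - v)^2) ∧
    ∫ ω : Fin n → E, ((1/n : ℝ) * ∑ i, h (ω i) - v)^2
      = ((∫ x, h x * h x) - (∫ x, h x)^2)/n + ((∫ x, h x) - v)^2 := by
  set m := ∫ x, h x with hm
  set V2 := ∫ x, h x * h x with hV2
  set c := (1/n : ℝ) with hc
  have key : ∀ ω : Fin n → E, (c * ∑ i, h (ω i) - v)^2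
      = c^2 * (∑ i, ∑ j, h (ω i) * h (ω j)) - (2*v*c) * (∑ i, h (ω i)) + v^2 := by
    intro ω
    rw [← Finset.sum_mul_sum]
    ring
  have hIij : ∀ i j : Fin n, Integrable (fun ω : Fin n → E => h (ω i) * h (ω j)) := by
    intro i j
    by_cases hij : i = j
    · subst hij; exact pi_integrable_single i (fun x => h x * h x) hh2
    · exact pi_integrable_pair i j hij h h hh hh
  have hF1 : Integrable (fun ω : Fin n → E => ∑ i, ∑ j, h (ω i) * h (ω j)) :=
    integrable_finset_sum _ (fun i _ => integrable_finset_sum _ (fun j _ => hIij i j))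
  have hF2 : Integrable (fun ω : Fin n → E => ∑ i, h (ω i)) :=
    integrable_finset_sum _ (fun i _ => pi_integrable_single i h hh)
  have hkey : (fun ω : Fin n → E => (c * ∑ i, h (ω i) - v)^2)
      = fun ω => c^2 * (∑ i, ∑ j, h (ω i) * h (ω j)) - (2*v*c) * (∑ i, h (ω i)) + v^2 :=
    funext key
  constructor
  · rw [hkey]
    exact ((hF1.const_mul _).sub (hF2.const_mul _)).add (integrable_const _)
  · rw [hkey]
    have hsub : Integrable (fun ω : Fin n → E =>
        c ^ 2 * (∑ i, ∑ j, h (ω i) * h (ω j)) - 2 * v * c * ∑ i, h (ω i)) := by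
      exact (hF1.const_mul _).sub (hF2.const_mul _)
    rw [integral_add hsub (integrable_const _),
      integral_sub (hF1.const_mul _) (hF2.const_mul _), integral_const_mul,
      integral_const_mul, integral_const, probReal_univ,
      integral_finset_sum _ (fun i _ => integrable_finset_sum _ (fun j _ => hIij i j)),
      integral_finset_sum _ (fun i _ => pi_integrable_single i h hh)]
    have inner_int : ∀ i : Fin n, ∫ ω : Fin n → E, ∑ j, h (ω i) * h (ω j)
        = ∑ j, ∫ ω : Fin n → E, h (ω i) * h (ω j) :=
      fun i => integral_finset_sum _ (fun j _ => hIij i j)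
    simp_rw [inner_int]
    have hval : ∀ i j : Fin n, ∫ ω : Fin n → E, h (ω i) * h (ω j)
        = if i = j then V2 else m * m := by
      intro i j
      by_cases hij : i = j
      · subst hij; rw [if_pos rfl]; exact pi_integral_single i (fun x => h x * h x)
      · rw [if_neg hij]; exact pi_integral_pair i j hij h h
    simp_rw [hval, pi_integral_single]
    have hcount : ∑ i : Fin n, ∑ j : Fin n, (if i = j then V2 else m * m)
        = (n:ℝ) * V2 + ((n:ℝ)^2 - n) * (m*m) := by
      have inner : ∀ i : Fin n, ∑ j : Fin n, (if i = j then V2 else m * m)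
          = (n:ℝ) * (m*m) + (V2 - m*m) := by
        intro i
        have : ∀ j : Fin n, (if i = j then V2 else m * m)
            = m*m + (if i = j then V2 - m*m else 0) := by
          intro j; by_cases hij : i = j <;> simp [hij]
        simp_rw [this, Finset.sum_add_distrib, Finset.sum_ite_eq, Finset.sum_const,
          Finset.card_univ, Fintype.card_fin, Finset.mem_univ, if_pos]
        push_cast; ring
      simp_rw [inner, Finset.sum_const, Finset.card_univ, Fintype.card_fin]
      push_cast; ring
    rw [hcount, Finset.sum_const, Finset.card_univ, Fintype.card_fin]
    have hn' : (n:ℝ) ≠ 0 := Nat.cast_ne_zero.2 hn.ne'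
    rw [hc, ← hm]
    field_simp
    ring
end PiLemmas

section JointLemmas
variable (lam : Measure X) (μp : Policy X A)

theorem policy_meas_kernel :
    Measurable (fun x => Measure.sum fun a : A =>
      ENNReal.ofReal (μp.prob x a) • Measure.dirac ((x, a) : X × A)) := by
  apply Measure.measurable_of_measurable_coe
  intro s hs
  have : (fun x => (Measure.sum fun a : A =>
      ENNReal.ofReal (μp.prob x a) • Measure.dirac ((x, a) : X × A)) s)
      = fun x => ∑ a : A, ENNReal.ofReal (μp.prob x a) * s.indicator 1 (x, a) := by
    funext x
    rw [Measure.sum_apply _ hs, tsum_fintype]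
    congr 1
    funext a
    rw [Measure.smul_apply, Measure.dirac_apply' _ hs, smul_eq_mul]
  rw [this]
  apply Finset.measurable_sum
  intro a _
  exact ((μp.meas a).ennreal_ofReal).mul
    ((measurable_one.indicator hs).comp measurable_prodMk_right)

/-- The pushforward representation of the joint measure. -/
theorem joint_eq : Policy.joint lam μp
    = ∑ a : A, ((lam.withDensity fun x => ENNReal.ofReal (μp.prob x a)).map
        (fun x => (x, a))) := by
  ext s hs
  rw [Policy.joint, Measure.bind_apply hs (policy_meas_kernel μp).aemeasurable]
  rw [Measure.finset_sum_apply]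
  have lhs : ∀ x, (Measure.sum fun a : A =>
      ENNReal.ofReal (μp.prob x a) • Measure.dirac ((x, a) : X × A)) s
      = ∑ a : A, Set.indicator ((fun x => (x, a)) ⁻¹' s)
          (fun x => ENNReal.ofReal (μp.prob x a)) x := by
    intro x
    rw [Measure.sum_apply _ hs, tsum_fintype]
    congr 1
    funext a
    rw [Measure.smul_apply, Measure.dirac_apply' _ hs, smul_eq_mul]
    by_cases hx : (x, a) ∈ s <;> simp [hx, Set.indicator_apply]
  simp_rw [lhs]
  rw [lintegral_finset_sum]
  · congr 1
    funext a
    rw [Measure.map_apply measurable_prodMk_right hs,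
      withDensity_apply _ (measurable_prodMk_right hs),
      ← lintegral_indicator (measurable_prodMk_right hs)]
  · intro a _
    exact ((μp.meas a).ennreal_ofReal).indicator (measurable_prodMk_right hs)

theorem policy_prob_le_one (πp : Policy X A) (x : X) (a : A) : πp.prob x a ≤ 1 := by
  have h := πp.sum_one x
  calc πp.prob x a ≤ ∑ b, πp.prob x b :=
    Finset.single_le_sum (fun b _ => πp.nonneg x b) (Finset.mem_univ a)
  _ = 1 := h

instance joint_prob [IsProbabilityMeasure lam] :
    IsProbabilityMeasure (Policy.joint lam μp) := by
  constructor
  rw [joint_eq lam μp, Measure.finset_sum_apply]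
  have : ∀ a : A, ((lam.withDensity fun x => ENNReal.ofReal (μp.prob x a)).map
      (fun x => (x, a))) Set.univ = ∫⁻ x, ENNReal.ofReal (μp.prob x a) ∂lam := by
    intro a
    rw [Measure.map_apply measurable_prodMk_right MeasurableSet.univ]
    simp [withDensity_apply _ MeasurableSet.univ]
  simp_rw [this]
  rw [← lintegral_finset_sum _ (fun a _ => (μp.meas a).ennreal_ofReal)]
  have : ∀ x, ∑ a : A, ENNReal.ofReal (μp.prob x a) = 1 := by
    intro x
    rw [← ENNReal.ofReal_sum_of_nonneg (fun a _ => μp.nonneg x a), μp.sum_one x]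
    exact ENNReal.ofReal_one
  simp_rw [this]
  simp

theorem integrable_joint_iff (φ : X × A → ℝ) (hφ : Measurable φ) :
    Integrable φ (Policy.joint lam μp)
      ↔ ∀ a : A, Integrable (fun x => μp.prob x a * φ (x, a)) lam := by
  rw [joint_eq lam μp, integrable_finset_sum_measure]
  have step : ∀ a : A, Integrable φ
      ((lam.withDensity fun x => ENNReal.ofReal (μp.prob x a)).map (fun x => (x, a)))
      ↔ Integrable (fun x => μp.prob x a * φ (x, a)) lam := by
    intro a
    rw [integrable_map_measure hφ.aestronglyMeasurable measurable_prodMk_right.aemeasurable]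
    have hd : (fun x => ENNReal.ofReal (μp.prob x a))
        = fun x => ((μp.prob x a).toNNReal : ℝ≥0∞) := rfl
    rw [hd, integrable_withDensity_iff_integrable_smul
      ((μp.meas a).real_toNNReal)]
    constructor <;> intro h <;> refine h.congr (Filter.Eventually.of_forall fun x => ?_) <;>
      simp [NNReal.smul_def, Real.coe_toNNReal _ (μp.nonneg x a), Function.comp]
  exact ⟨fun h a => (step a).1 (h a (Finset.mem_univ a)), fun h a _ => (step a).2 (h a)⟩

theorem integral_joint (φ : X × A → ℝ) (hφ : Measurable φ)
    (hint : Integrable φ (Policy.joint lam μp)) :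
    ∫ p, φ p ∂(Policy.joint lam μp) = ∫ x, ∑ a, μp.prob x a * φ (x, a) ∂lam := by
  have h' := (integrable_joint_iff lam μp φ hφ).1 hint
  rw [joint_eq lam μp, integral_finset_sum_measure]
  · have step : ∀ a : A, ∫ p, φ p
        ∂((lam.withDensity fun x => ENNReal.ofReal (μp.prob x a)).map (fun x => (x, a)))
        = ∫ x, μp.prob x a * φ (x, a) ∂lam := by
      intro a
      rw [integral_map measurable_prodMk_right.aemeasurable hφ.aestronglyMeasurable]
      have hd : (fun x => ENNReal.ofReal (μp.prob x a))
          = fun x => ((μp.prob x a).toNNReal : ℝ≥0∞) := rfl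
      rw [hd, integral_withDensity_eq_integral_smul ((μp.meas a).real_toNNReal)]
      congr 1
      funext x
      simp [NNReal.smul_def, Real.coe_toNNReal _ (μp.nonneg x a)]
    simp_rw [step]
    rw [← integral_finset_sum]
    intro a _
    exact h' a
  · intro a _
    rw [integrable_map_measure hφ.aestronglyMeasurable measurable_prodMk_right.aemeasurable]
    have hd : (fun x => ENNReal.ofReal (μp.prob x a))
        = fun x => ((μp.prob x a).toNNReal : ℝ≥0∞) := rfl
    rw [hd, integrable_withDensity_iff_integrable_smul ((μp.meas a).real_toNNReal)]
    refine (h' a).congr (Filter.Eventually.of_forall fun x => ?_)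
    simp [NNReal.smul_def, Real.coe_toNNReal _ (μp.nonneg x a), Function.comp]

end JointLemmas
section SampleLemmas
variable (lam : Measure X) [IsProbabilityMeasure lam] (μp : Policy X A)
  (D : Kernel (X × A) ℝ) [IsMarkovKernel D]

theorem sample_eq : sampleMeasure lam μp D = (Policy.joint lam μp) ⊗ₘ D := by
  ext s hs
  have hmeas : Measurable (fun p : X × A => (D p).map (fun r => (p, r))) := by
    apply Measure.measurable_of_measurable_coe
    intro t ht
    have : (fun p : X × A => ((D p).map (fun r => (p, r))) t)
        = fun p => D p (Prod.mk p ⁻¹' t) := by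
      funext p
      rw [Measure.map_apply measurable_prodMk_left ht]
    rw [this]
    exact Kernel.measurable_kernel_prodMk_left ht
  rw [sampleMeasure, Measure.bind_apply hs hmeas.aemeasurable, Measure.compProd_apply hs]
  congr 1
  funext p
  rw [Measure.map_apply measurable_prodMk_left hs]

theorem measurable_impW (μp πp : Policy X A) : Measurable (impW μp πp) := by
  apply measurable_from_prod_countable_left
  intro a
  exact (πp.meas a).div (μp.meas a)

theorem impW_nonneg (μp πp : Policy X A) (p : X × A) : 0 ≤ impW μp πp p :=
  div_nonneg (πp.nonneg _ _) (μp.nonneg _ _)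

theorem measurable_rstar : Measurable (rstar D) :=
  (StronglyMeasurable.integral_kernel_prod_right'
    (κ := D) (measurable_snd.stronglyMeasurable)).measurable

theorem measurable_M2 : Measurable (fun p => ∫ r, r ^ 2 ∂(D p)) :=
  (StronglyMeasurable.integral_kernel_prod_right'
    (κ := D) ((measurable_snd.pow_const 2).stronglyMeasurable)).measurable

end SampleLemmas

section SwitchDefs
variable {X A : Type*} [MeasurableSpace X] [Fintype A] [MeasurableSpace A]

/-- Indicator of `ρ ≤ τ`. -/
noncomputable def indLE (μp πp : Policy X A) (τ : ℝ) (p : X × A) : ℝ :=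
  if impW μp πp p ≤ τ then 1 else 0

/-- Indicator of `ρ > τ`. -/
noncomputable def indGT (μp πp : Policy X A) (τ : ℝ) (p : X × A) : ℝ :=
  if τ < impW μp πp p then 1 else 0

/-- The importance-sampling part of the SWITCH estimator. -/
noncomputable def fSW (μp πp : Policy X A) (τ : ℝ) (q : (X × A) × ℝ) : ℝ :=
  q.2 * impW μp πp q.1 * indLE μp πp τ q.1

/-- The model part of the SWITCH estimator. -/
noncomputable def gSW (μp πp : Policy X A) (rhat : X × A → ℝ) (τ : ℝ) (x : X) : ℝ :=
  ∑ a, rhat (x, a) * πp.prob x a * indGT μp πp τ (x, a)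

/-- The per-sample summand of the SWITCH estimator. -/
noncomputable def hSW (μp πp : Policy X A) (rhat : X × A → ℝ) (τ : ℝ)
    (q : (X × A) × ℝ) : ℝ :=
  fSW μp πp τ q + gSW μp πp rhat τ q.1.1

theorem indLE_nonneg (μp πp : Policy X A) (τ : ℝ) (p : X × A) : 0 ≤ indLE μp πp τ p := by
  unfold indLE; split <;> norm_num

theorem indGT_nonneg (μp πp : Policy X A) (τ : ℝ) (p : X × A) : 0 ≤ indGT μp πp τ p := by
  unfold indGT; split <;> norm_num

theorem switchEst_eq [Nonempty A] [MeasurableSingletonClass A]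
    (μp πp : Policy X A) (rhat : X × A → ℝ) (τ : ℝ) (n : ℕ)
    (ω : Fin n → (X × A) × ℝ) :
    switchEst μp πp rhat τ n ω = (1/n : ℝ) * ∑ i, hSW μp πp rhat τ (ω i) := by
  rw [switchEst, ← mul_add, ← Finset.sum_add_distrib]
  rfl

end SwitchDefs

/-- Theorem 2: MSE bound for the SWITCH estimator. -/
theorem switch_mse_bound
    (lam : Measure X) [IsProbabilityMeasure lam] (μp πp : Policy X A)
    (habs : ∀ x a, 0 < πp.prob x a → 0 < μp.prob x a)
    (σf Rmax : X × A → ℝ) (hσm : Measurable σf) (hRm : Measurable Rmax)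
    (hσnn : ∀ p, 0 ≤ σf p) (hRnn : ∀ p, 0 ≤ Rmax p)
    (D : Kernel (X × A) ℝ) (hD : InRewardClass lam μp σf Rmax D)
    (rhat : X × A → ℝ) (hrm : Measurable rhat)
    (hrb : ∀ p, 0 ≤ rhat p ∧ rhat p ≤ Rmax p)
    (τ : ℝ) (hτ : 0 < τ) (n : ℕ) (hn : 0 < n)
    (hint1 : Integrable (fun x => ∑ a, μp.prob x a *
      ((σf (x, a) ^ 2 + Rmax (x, a) ^ 2) * impW μp πp (x, a) ^ 2 *
        (if impW μp πp (x, a) ≤ τ then 1 else 0))) lam)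
    (hint2 : Integrable (fun x => ∑ a, πp.prob x a *
      (Rmax (x, a) ^ 2 * (if τ < impW μp πp (x, a) then 1 else 0))) lam)
    (hint3 : Integrable (fun x => ∑ a, πp.prob x a *
      ((rhat (x, a) - rstar D (x, a)) * (if τ < impW μp πp (x, a) then 1 else 0))) lam) :
    (∫⁻ ω, ENNReal.ofReal ((switchEst μp πp rhat τ n ω - vpi lam πp D) ^ 2)
        ∂(Measure.pi fun _ : Fin n => sampleMeasure lam μp D))
      ≤ ENNReal.ofReal
        ((2 / n) *
          (Emu lam μp (fun p => (σf p ^ 2 + Rmax p ^ 2) * impW μp πp p ^ 2 *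
              (if impW μp πp p ≤ τ then 1 else 0))
            + Epi lam πp (fun p => Rmax p ^ 2 * (if τ < impW μp πp p then 1 else 0)))
          + (Epi lam πp (fun p => (rhat p - rstar D p) *
              (if τ < impW μp πp p then 1 else 0))) ^ 2) := by
  classical
  obtain ⟨hMarkov, hL2, hae⟩ := hD
  haveI := hMarkov
  have hSeq : sampleMeasure lam μp D = (Policy.joint lam μp) ⊗ₘ D := sample_eq lam μp D
  set J := Policy.joint lam μp with hJdef
  set S := J ⊗ₘ D with hSdef
  haveI hJprob : IsProbabilityMeasure J := joint_prob lam μp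
  haveI hSprob : IsProbabilityMeasure S := by rw [hSdef]; infer_instance
  -- measurability of the basic functions
  have hρm : Measurable (impW μp πp) := measurable_impW μp πp
  have hρnn : ∀ p, 0 ≤ impW μp πp p := impW_nonneg μp πp
  have hIm : Measurable (indLE μp πp τ) :=
    Measurable.ite (measurableSet_le hρm measurable_const) measurable_const measurable_const
  have hGm : Measurable (indGT μp πp τ) :=
    Measurable.ite (measurableSet_lt measurable_const hρm) measurable_const measurable_const
  have hfm : Measurable (fSW μp πp τ) :=
    (measurable_snd.mul (hρm.comp measurable_fst)).mul (hIm.comp measurable_fst)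
  have hgm : Measurable (gSW μp πp rhat τ) :=
    Finset.measurable_sum _ (fun a _ =>
      ((hrm.comp measurable_prodMk_right).mul (πp.meas a)).mul
        (hGm.comp measurable_prodMk_right))
  have hg2m : Measurable (fun q : (X × A) × ℝ => gSW μp πp rhat τ q.1.1) :=
    hgm.comp (measurable_fst.comp measurable_fst)
  have hhm : Measurable (hSW μp πp rhat τ) := hfm.add hg2m
  have hrstarm : Measurable (rstar D) := measurable_rstar D
  have hM2m : Measurable (fun p : X × A => ∫ r, r ^ 2 ∂D p) := measurable_M2 D
  -- the dominating function ψ1 for the importance sampling part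
  set ψ1 : X × A → ℝ := fun p =>
    (σf p ^ 2 + Rmax p ^ 2) * impW μp πp p ^ 2 * indLE μp πp τ p with hψ1def
  have hψ1m : Measurable ψ1 :=
    (((hσm.pow_const 2).add (hRm.pow_const 2)).mul (hρm.pow_const 2)).mul hIm
  have hψ1nn : ∀ p, 0 ≤ ψ1 p := fun p =>
    mul_nonneg (mul_nonneg (add_nonneg (sq_nonneg _) (sq_nonneg _)) (sq_nonneg _))
      (indLE_nonneg μp πp τ p)
  have hint1' : Integrable (fun x => ∑ a, μp.prob x a * ψ1 (x, a)) lam := hint1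
  have hψ1J : Integrable ψ1 J := by
    refine (integrable_joint_iff lam μp ψ1 hψ1m).2 fun a => ?_
    refine hint1'.mono' ((μp.meas a).mul
      (hψ1m.comp measurable_prodMk_right)).aestronglyMeasurable ?_
    refine Filter.Eventually.of_forall fun x => ?_
    rw [Real.norm_eq_abs, abs_of_nonneg (mul_nonneg (μp.nonneg x a) (hψ1nn _))]
    exact Finset.single_le_sum
      (fun b _ => mul_nonneg (μp.nonneg x b) (hψ1nn _)) (Finset.mem_univ a)
  -- the second moment of the reward
  have hM2nn : ∀ p, 0 ≤ ∫ r, r ^ 2 ∂D p := fun p => integral_nonneg (fun r => sq_nonneg r)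
  have haeJ : ∀ᵐ p ∂J, (∫ r, r ^ 2 ∂D p) ≤ σf p ^ 2 + Rmax p ^ 2 := by
    filter_upwards [hae] with p hp
    obtain ⟨h0, hR, hv⟩ := hp
    have hmem : MemLp id 2 (D p) :=
      (memLp_two_iff_integrable_sq aestronglyMeasurable_id).2 (by simpa using hL2 p)
    have hvar := variance_eq_sub hmem
    have h2 : ∫ r, r ^ 2 ∂D p = variance id (D p) + (rstar D p) ^ 2 := by
      rw [hvar]; simp only [Pi.pow_apply, id_eq]; rw [rstar]; ring
    rw [h2]
    have : (rstar D p) ^ 2 ≤ Rmax p ^ 2 := by nlinarith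
    exact add_le_add hv this
  -- W p = (ρ² ind) ∫ r²
  set W : X × A → ℝ := fun p =>
    (impW μp πp p ^ 2 * indLE μp πp τ p) * ∫ r, r ^ 2 ∂D p with hWdef
  have hWm : Measurable W := ((hρm.pow_const 2).mul hIm).mul hM2m
  have hWnn : ∀ p, 0 ≤ W p := fun p =>
    mul_nonneg (mul_nonneg (sq_nonneg _) (indLE_nonneg μp πp τ p)) (hM2nn p)
  have hWψ : ∀ᵐ p ∂J, ‖W p‖ ≤ ψ1 p := by
    filter_upwards [haeJ] with p hp
    rw [Real.norm_eq_abs, abs_of_nonneg (hWnn p)]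
    calc (impW μp πp p ^ 2 * indLE μp πp τ p) * ∫ r, r ^ 2 ∂D p
        ≤ (impW μp πp p ^ 2 * indLE μp πp τ p) * (σf p ^ 2 + Rmax p ^ 2) :=
          mul_le_mul_of_nonneg_left hp
            (mul_nonneg (sq_nonneg _) (indLE_nonneg μp πp τ p))
      _ = ψ1 p := by rw [hψ1def]; ring
  have hWint : Integrable W J := hψ1J.mono' hWm.aestronglyMeasurable hWψ
  -- the square of fSW
  have hsqf : ∀ (p : X × A) (r : ℝ), fSW μp πp τ (p, r) * fSW μp πp τ (p, r)
      = (impW μp πp p ^ 2 * indLE μp πp τ p) * r ^ 2 := by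
    intro p r
    rw [fSW, indLE]
    by_cases hc : impW μp πp p ≤ τ <;> simp [indLE, hc] <;> ring
  have hf2S : Integrable (fun q => fSW μp πp τ q * fSW μp πp τ q) S := by
    rw [hSdef]
    refine (Measure.integrable_compProd_iff (hfm.mul hfm).aestronglyMeasurable).2 ⟨?_, ?_⟩
    · refine Filter.Eventually.of_forall fun p => ?_
      exact ((hL2 p).const_mul _).congr
        (Filter.Eventually.of_forall fun r => (hsqf p r).symm)
    · have : (fun p => ∫ r, ‖fSW μp πp τ (p, r) * fSW μp πp τ (p, r)‖ ∂D p) = W := by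
        funext p
        simp_rw [Real.norm_eq_abs, abs_mul_self, hsqf p]
        rw [integral_const_mul]
      simp only [Pi.mul_apply]
      rw [this]
      exact hWint
  have hf2val : ∫ q, fSW μp πp τ q * fSW μp πp τ q ∂S = ∫ p, W p ∂J := by
    rw [hSdef, Measure.integral_compProd (hSdef ▸ hf2S)]
    congr 1
    funext p
    simp_rw [hsqf p]
    rw [integral_const_mul]
  have hf2le : ∫ q, fSW μp πp τ q * fSW μp πp τ q ∂S
      ≤ Emu lam μp (fun p => (σf p ^ 2 + Rmax p ^ 2) * impW μp πp p ^ 2 *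
          (if impW μp πp p ≤ τ then 1 else 0)) := by
    rw [hf2val]
    have step1 : ∫ p, W p ∂J ≤ ∫ p, ψ1 p ∂J := by
      refine integral_mono_ae hWint hψ1J ?_
      filter_upwards [hWψ] with p hp
      exact le_trans (le_abs_self _) hp
    refine step1.trans_eq ?_
    exact integral_joint lam μp ψ1 hψ1m hψ1J
  -- the model part
  have hgnn : ∀ x, 0 ≤ gSW μp πp rhat τ x := fun x =>
    Finset.sum_nonneg fun a _ =>
      mul_nonneg (mul_nonneg (hrb _).1 (πp.nonneg x a)) (indGT_nonneg μp πp τ _)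
  set G2 : X → ℝ := fun x =>
    ∑ a, πp.prob x a * (Rmax (x, a) ^ 2 * indGT μp πp τ (x, a)) with hG2def
  have hG2m : Measurable G2 :=
    Finset.measurable_sum _ (fun a _ => (πp.meas a).mul
      (((hRm.comp measurable_prodMk_right).pow_const 2).mul
        (hGm.comp measurable_prodMk_right)))
  have hG2nn : ∀ x, 0 ≤ G2 x := fun x =>
    Finset.sum_nonneg fun a _ => mul_nonneg (πp.nonneg x a)
      (mul_nonneg (sq_nonneg _) (indGT_nonneg μp πp τ _))
  have hG2int : Integrable G2 lam := hint2
  have hCS : ∀ x, gSW μp πp rhat τ x * gSW μp πp rhat τ x ≤ G2 x := by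
    intro x
    have h1 : gSW μp πp rhat τ x = ∑ a, Real.sqrt (πp.prob x a) *
        (Real.sqrt (πp.prob x a) * (rhat (x, a) * indGT μp πp τ (x, a))) := by
      rw [gSW]
      refine Finset.sum_congr rfl fun a _ => ?_
      rw [← mul_assoc, Real.mul_self_sqrt (πp.nonneg x a)]
      ring
    have h2 := Finset.sum_mul_sq_le_sq_mul_sq Finset.univ
      (fun a => Real.sqrt (πp.prob x a))
      (fun a => Real.sqrt (πp.prob x a) * (rhat (x, a) * indGT μp πp τ (x, a)))
    have h3 : ∑ a, Real.sqrt (πp.prob x a) ^ 2 = 1 := by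
      have : ∀ a : A, Real.sqrt (πp.prob x a) ^ 2 = πp.prob x a := fun a =>
        Real.sq_sqrt (πp.nonneg x a)
      simp_rw [this]; exact πp.sum_one x
    have h4 : ∑ a, (Real.sqrt (πp.prob x a) * (rhat (x, a) * indGT μp πp τ (x, a))) ^ 2
        ≤ G2 x := by
      rw [hG2def]
      refine Finset.sum_le_sum fun a _ => ?_
      rw [mul_pow, Real.sq_sqrt (πp.nonneg x a)]
      refine mul_le_mul_of_nonneg_left ?_ (πp.nonneg x a)
      rw [mul_pow]
      have hind : indGT μp πp τ (x, a) ^ 2 = indGT μp πp τ (x, a) := by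
        rw [indGT]; split <;> norm_num
      rw [hind]
      refine mul_le_mul_of_nonneg_right ?_ (indGT_nonneg μp πp τ _)
      have := (hrb (x, a)).1
      have := (hrb (x, a)).2
      nlinarith
    calc gSW μp πp rhat τ x * gSW μp πp rhat τ x
        = (∑ a, Real.sqrt (πp.prob x a) *
            (Real.sqrt (πp.prob x a) * (rhat (x, a) * indGT μp πp τ (x, a)))) ^ 2 := by
          rw [← h1]; ring
      _ ≤ (∑ a, Real.sqrt (πp.prob x a) ^ 2) *
            ∑ a, (Real.sqrt (πp.prob x a) * (rhat (x, a) * indGT μp πp τ (x, a))) ^ 2 := h2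
      _ ≤ G2 x := by rw [h3, one_mul]; exact h4
  have hG2J : Integrable (fun p : X × A => G2 p.1) J := by
    refine (integrable_joint_iff lam μp (fun p => G2 p.1) (hG2m.comp measurable_fst)).2 fun a => ?_
    refine hG2int.mono' ((μp.meas a).mul (hG2m.comp measurable_id)).aestronglyMeasurable ?_
    refine Filter.Eventually.of_forall fun x => ?_
    show ‖μp.prob x a * G2 x‖ ≤ G2 x
    rw [Real.norm_eq_abs, abs_of_nonneg (mul_nonneg (μp.nonneg x a) (hG2nn x))]
    exact mul_le_of_le_one_left (hG2nn x) (policy_prob_le_one μp x a)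
  have hg2J : Integrable (fun p : X × A => gSW μp πp rhat τ p.1 * gSW μp πp rhat τ p.1) J := by
    refine hG2J.mono' ((hgm.comp measurable_fst).mul
      (hgm.comp measurable_fst)).aestronglyMeasurable ?_
    refine Filter.Eventually.of_forall fun p => ?_
    rw [Real.norm_eq_abs, abs_mul_self]
    exact hCS p.1
  have hg2S : Integrable (fun q : (X × A) × ℝ =>
      gSW μp πp rhat τ q.1.1 * gSW μp πp rhat τ q.1.1) S := by
    rw [hSdef]
    refine (Measure.integrable_compProd_iff (hg2m.mul hg2m).aestronglyMeasurable).2 ⟨?_, ?_⟩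
    · refine Filter.Eventually.of_forall fun p => ?_
      exact (integrable_const _ : Integrable
        (fun _ : ℝ => gSW μp πp rhat τ p.1 * gSW μp πp rhat τ p.1) (D p))
    · have : (fun p : X × A => ∫ r, ‖gSW μp πp rhat τ p.1 * gSW μp πp rhat τ p.1‖ ∂D p)
          = fun p : X × A => gSW μp πp rhat τ p.1 * gSW μp πp rhat τ p.1 := by
        funext p
        rw [integral_const, probReal_univ]
        simp [Real.norm_eq_abs, abs_mul_self]
      simp only [Pi.mul_apply]
      rw [this]
      exact hg2J
  have hg2val : ∫ q, gSW μp πp rhat τ q.1.1 * gSW μp πp rhat τ q.1.1 ∂S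
      = ∫ p, gSW μp πp rhat τ p.1 * gSW μp πp rhat τ p.1 ∂J := by
    rw [hSdef, Measure.integral_compProd (hSdef ▸ hg2S)]
    congr 1
    funext p
    show ∫ _r : ℝ, gSW μp πp rhat τ p.1 * gSW μp πp rhat τ p.1 ∂D p = _
    rw [integral_const, probReal_univ]
    simp
  have hG2Jval : ∫ p, G2 p.1 ∂J
      = Epi lam πp (fun p => Rmax p ^ 2 * (if τ < impW μp πp p then 1 else 0)) := by
    rw [integral_joint lam μp (fun p => G2 p.1) (hG2m.comp measurable_fst) hG2J]
    have : (fun x => ∑ a, μp.prob x a * G2 (x, a).1) = G2 := by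
      funext x
      show ∑ a, μp.prob x a * G2 x = G2 x
      rw [← Finset.sum_mul, μp.sum_one, one_mul]
    rw [this]
    rfl
  have hg2le : ∫ q, gSW μp πp rhat τ q.1.1 * gSW μp πp rhat τ q.1.1 ∂S
      ≤ Epi lam πp (fun p => Rmax p ^ 2 * (if τ < impW μp πp p then 1 else 0)) := by
    rw [hg2val, ← hG2Jval]
    exact integral_mono hg2J hG2J (fun p => hCS p.1)
  -- MemLp facts
  have hsq_eq : ∀ (u : (X × A) × ℝ → ℝ), (fun q => u q ^ 2) = fun q => u q * u q := by
    intro u; funext q; ring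
  have hfL2 : MemLp (fSW μp πp τ) 2 S := by
    refine (memLp_two_iff_integrable_sq hfm.aestronglyMeasurable).2 ?_
    rw [hsq_eq]; exact hf2S
  have hgL2 : MemLp (fun q : (X × A) × ℝ => gSW μp πp rhat τ q.1.1) 2 S := by
    refine (memLp_two_iff_integrable_sq hg2m.aestronglyMeasurable).2 ?_
    rw [hsq_eq]; exact hg2S
  have hhL2 : MemLp (hSW μp πp rhat τ) 2 S := by
    have := hfL2.add hgL2
    exact this
  have hh1 : Integrable (hSW μp πp rhat τ) S := hhL2.integrable one_le_two
  have hh2 : Integrable (fun q => hSW μp πp rhat τ q * hSW μp πp rhat τ q) S := by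
    rw [← hsq_eq]
    exact (memLp_two_iff_integrable_sq hhm.aestronglyMeasurable).1 hhL2
  have hfint : Integrable (fSW μp πp τ) S := hfL2.integrable one_le_two
  have hgint : Integrable (fun q : (X × A) × ℝ => gSW μp πp rhat τ q.1.1) S :=
    hgL2.integrable one_le_two
  -- variance bound
  have hh2le : ∫ q, hSW μp πp rhat τ q * hSW μp πp rhat τ q ∂S
      ≤ 2 * (∫ q, fSW μp πp τ q * fSW μp πp τ q ∂S)
        + 2 * (∫ q, gSW μp πp rhat τ q.1.1 * gSW μp πp rhat τ q.1.1 ∂S) := by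
    have hint : Integrable (fun q : (X × A) × ℝ =>
        2 * (fSW μp πp τ q * fSW μp πp τ q)
          + 2 * (gSW μp πp rhat τ q.1.1 * gSW μp πp rhat τ q.1.1)) S := by
      exact (hf2S.const_mul 2).add (hg2S.const_mul 2)
    have step := integral_mono hh2 hint (fun q => by
      have h := sq_nonneg (fSW μp πp τ q - gSW μp πp rhat τ q.1.1)
      rw [hSW]
      nlinarith)
    refine step.trans_eq ?_
    rw [integral_add (hf2S.const_mul 2) (hg2S.const_mul 2), integral_const_mul,
      integral_const_mul]
  -- mean of fSW
  have hinner_f : ∀ p : X × A, ∫ r, fSW μp πp τ (p, r) ∂D p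
      = (impW μp πp p * indLE μp πp τ p) * rstar D p := by
    intro p
    have : (fun r => fSW μp πp τ (p, r))
        = fun r => (impW μp πp p * indLE μp πp τ p) * r := by
      funext r; rw [fSW]; ring
    rw [this, integral_const_mul, rstar]
  have hfmean : ∫ q, fSW μp πp τ q ∂S
      = ∫ p, (impW μp πp p * indLE μp πp τ p) * rstar D p ∂J := by
    rw [hSdef, Measure.integral_compProd (hSdef ▸ hfint)]
    congr 1
    funext p
    exact hinner_f p
  have hKm : Measurable (fun p : X × A =>
      (impW μp πp p * indLE μp πp τ p) * rstar D p) := (hρm.mul hIm).mul hrstarm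
  have hKJ : Integrable (fun p : X × A =>
      (impW μp πp p * indLE μp πp τ p) * rstar D p) J := by
    have hnorm := ((Measure.integrable_compProd_iff
      hfm.aestronglyMeasurable).1 (hSdef ▸ hfint)).2
    refine hnorm.mono' hKm.aestronglyMeasurable ?_
    refine Filter.Eventually.of_forall fun p => ?_
    have hcnn : 0 ≤ impW μp πp p * indLE μp πp τ p :=
      mul_nonneg (hρnn p) (indLE_nonneg μp πp τ p)
    rw [Real.norm_eq_abs, abs_mul, abs_of_nonneg hcnn]
    calc impW μp πp p * indLE μp πp τ p * |rstar D p|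
        ≤ impW μp πp p * indLE μp πp τ p * ∫ r, |r| ∂D p := by
          refine mul_le_mul_of_nonneg_left ?_ hcnn
          rw [rstar]
          have hni := norm_integral_le_integral_norm (μ := D p) (f := fun r : ℝ => r)
          simpa [Real.norm_eq_abs] using hni
      _ = ∫ r, ‖fSW μp πp τ (p, r)‖ ∂D p := by
          rw [← integral_const_mul]
          congr 1
          funext r
          rw [fSW, Real.norm_eq_abs, abs_mul, abs_mul,
            abs_of_nonneg (hρnn p), abs_of_nonneg (indLE_nonneg μp πp τ p)]
          ring
  -- mean of gSW
  have hgJ : Integrable (fun p : X × A => gSW μp πp rhat τ p.1) J := by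
    have hnorm := ((Measure.integrable_compProd_iff
      hg2m.aestronglyMeasurable).1 (hSdef ▸ hgint)).2
    refine hnorm.congr ?_
    refine Filter.Eventually.of_forall fun p => ?_
    show ∫ _r : ℝ, ‖gSW μp πp rhat τ p.1‖ ∂D p = gSW μp πp rhat τ p.1
    rw [integral_const, probReal_univ]
    simp [Real.norm_eq_abs, abs_of_nonneg (hgnn p.1)]
  have hgmean : ∫ q, gSW μp πp rhat τ q.1.1 ∂S = ∫ p, gSW μp πp rhat τ p.1 ∂J := by
    rw [hSdef, Measure.integral_compProd (hSdef ▸ hgint)]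
    congr 1
    funext p
    show ∫ _r : ℝ, gSW μp πp rhat τ p.1 ∂D p = _
    rw [integral_const, probReal_univ]
    simp
  -- transfer to lam
  have hμρ : ∀ x a, μp.prob x a * impW μp πp (x, a) = πp.prob x a := by
    intro x a
    by_cases hz : μp.prob x a = 0
    · have hπ : πp.prob x a = 0 := by
        by_contra hne
        have := habs x a (lt_of_le_of_ne (πp.nonneg x a) (Ne.symm hne))
        exact absurd hz this.ne'
      rw [hz, hπ, zero_mul]
    · rw [impW]
      field_simp
  have hKlam : ∀ a, Integrable (fun x =>
      μp.prob x a * ((impW μp πp (x, a) * indLE μp πp τ (x, a)) * rstar D (x, a))) lam :=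
    fun a => (integrable_joint_iff lam μp (fun p => (impW μp πp p * indLE μp πp τ p) * rstar D p) hKm).1 hKJ a
  set A1 : X → ℝ := fun x =>
    ∑ a, πp.prob x a * (indLE μp πp τ (x, a) * rstar D (x, a)) with hA1def
  have hA1eq : (fun x => ∑ a, μp.prob x a *
      ((impW μp πp (x, a) * indLE μp πp τ (x, a)) * rstar D (x, a))) = A1 := by
    funext x
    refine Finset.sum_congr rfl fun a _ => ?_
    rw [← mul_assoc, ← mul_assoc, hμρ x a]
    ring
  have hA1int : Integrable A1 lam := by
    rw [← hA1eq]
    exact integrable_finset_sum _ (fun a _ => hKlam a)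
  have hKJval : ∫ p, (impW μp πp p * indLE μp πp τ p) * rstar D p ∂J = ∫ x, A1 x ∂lam := by
    rw [integral_joint lam μp (fun p => (impW μp πp p * indLE μp πp τ p) * rstar D p) hKm hKJ, ← hA1eq]
  have hglam : ∀ a, Integrable (fun x => μp.prob x a * gSW μp πp rhat τ x) lam :=
    fun a => (integrable_joint_iff lam μp (fun p => gSW μp πp rhat τ p.1) (hgm.comp measurable_fst)).1 hgJ a
  have hgsum : (fun x => ∑ a, μp.prob x a * gSW μp πp rhat τ x) = gSW μp πp rhat τ := by
    funext x
    rw [← Finset.sum_mul, μp.sum_one, one_mul]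
  have hglamint : Integrable (gSW μp πp rhat τ) lam := by
    rw [← hgsum]
    exact integrable_finset_sum _ (fun a _ => hglam a)
  have hgJval : ∫ p, gSW μp πp rhat τ p.1 ∂J = ∫ x, gSW μp πp rhat τ x ∂lam := by
    rw [integral_joint lam μp (fun p => gSW μp πp rhat τ p.1) (hgm.comp measurable_fst) hgJ]
    have heq : (fun x => ∑ a, μp.prob x a * gSW μp πp rhat τ (x, a).1)
        = fun x => gSW μp πp rhat τ x := by
      funext x
      show ∑ a, μp.prob x a * gSW μp πp rhat τ x = gSW μp πp rhat τ x
      rw [← Finset.sum_mul, μp.sum_one, one_mul]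
    rw [heq]
  -- the bias
  set G3 : X → ℝ := fun x => ∑ a, πp.prob x a *
    ((rhat (x, a) - rstar D (x, a)) * indGT μp πp τ (x, a)) with hG3def
  have hG3int : Integrable G3 lam := hint3
  have hC : (fun x => ∑ a, πp.prob x a * rstar D (x, a))
      = fun x => A1 x + gSW μp πp rhat τ x - G3 x := by
    funext x
    rw [hA1def, gSW, hG3def, ← Finset.sum_add_distrib, ← Finset.sum_sub_distrib]
    refine Finset.sum_congr rfl fun a _ => ?_
    rw [indLE, indGT]
    by_cases hc : impW μp πp (x, a) ≤ τ
    · rw [if_pos hc, if_neg (not_lt.2 hc)]; ring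
    · rw [if_neg hc, if_pos (not_le.1 hc)]; ring
  have hvpi : vpi lam πp D = ∫ x, A1 x ∂lam + ∫ x, gSW μp πp rhat τ x ∂lam
      - ∫ x, G3 x ∂lam := by
    rw [vpi, hC]
    have hsum : Integrable (fun x => A1 x + gSW μp πp rhat τ x) lam := hA1int.add hglamint
    rw [integral_sub hsum hG3int, integral_add hA1int hglamint]
  -- the mean
  have hmean : ∫ q, hSW μp πp rhat τ q ∂S
      = ∫ x, A1 x ∂lam + ∫ x, gSW μp πp rhat τ x ∂lam := by
    have : (fun q => hSW μp πp rhat τ q)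
        = fun q : (X × A) × ℝ => fSW μp πp τ q + gSW μp πp rhat τ q.1.1 := rfl
    rw [this, integral_add hfint hgint, hfmean, hKJval, hgmean, hgJval]
  have hbias : ∫ q, hSW μp πp rhat τ q ∂S - vpi lam πp D
      = Epi lam πp (fun p => (rhat p - rstar D p) *
          (if τ < impW μp πp p then 1 else 0)) := by
    have hEpi : Epi lam πp (fun p => (rhat p - rstar D p) *
        (if τ < impW μp πp p then 1 else 0)) = ∫ x, G3 x ∂lam := rfl
    rw [hEpi, hmean, hvpi]
    ring
  -- finish with the product measure
  letI mE : MeasureSpace ((X × A) × ℝ) := ⟨S⟩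
  haveI : IsProbabilityMeasure (volume : Measure ((X × A) × ℝ)) := hSprob
  obtain ⟨hFint, hFval⟩ := pi_mse (E := (X × A) × ℝ) hn (hSW μp πp rhat τ) hh1 hh2
    (vpi lam πp D)
  have hmeas_eq : (Measure.pi fun _ : Fin n => sampleMeasure lam μp D)
      = (volume : Measure (Fin n → (X × A) × ℝ)) := by
    have h1 : (fun _ : Fin n => sampleMeasure lam μp D)
        = fun _ : Fin n => (volume : Measure ((X × A) × ℝ)) := by
      funext _; exact hSeq
    rw [h1, ← MeasureTheory.volume_pi]
  rw [hmeas_eq]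
  have hintegrand : ∀ ω : Fin n → (X × A) × ℝ,
      (switchEst μp πp rhat τ n ω - vpi lam πp D) ^ 2
        = ((1/n : ℝ) * ∑ i, hSW μp πp rhat τ (ω i) - vpi lam πp D) ^ 2 := by
    intro ω
    rw [switchEst_eq]
  simp_rw [hintegrand]
  rw [← ofReal_integral_eq_lintegral_ofReal hFint
    (Filter.Eventually.of_forall fun ω => sq_nonneg _)]
  refine ENNReal.ofReal_le_ofReal ?_
  rw [hFval]
  have hbias' : (∫ x, hSW μp πp rhat τ x) - vpi lam πp D
      = Epi lam πp (fun p => (rhat p - rstar D p) *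
          (if τ < impW μp πp p then 1 else 0)) := hbias
  rw [hbias']
  have hnpos : (0:ℝ) < n := Nat.cast_pos.2 hn
  set T1 := Emu lam μp (fun p => (σf p ^ 2 + Rmax p ^ 2) * impW μp πp p ^ 2 *
      (if impW μp πp p ≤ τ then 1 else 0)) with hT1
  set T2 := Epi lam πp (fun p => Rmax p ^ 2 * (if τ < impW μp πp p then 1 else 0)) with hT2
  have hV2 : ∫ x, hSW μp πp rhat τ x * hSW μp πp rhat τ x ≤ 2 * T1 + 2 * T2 := by
    have h1 : (∫ x, hSW μp πp rhat τ x * hSW μp πp rhat τ x)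
        ≤ 2 * (∫ q, fSW μp πp τ q * fSW μp πp τ q ∂S)
          + 2 * (∫ q, gSW μp πp rhat τ q.1.1 * gSW μp πp rhat τ q.1.1 ∂S) := hh2le
    have h2 := hf2le
    have h3 := hg2le
    linarith
  have hstep : ((∫ x, hSW μp πp rhat τ x * hSW μp πp rhat τ x)
      - (∫ x, hSW μp πp rhat τ x) ^ 2) / n ≤ 2 / n * (T1 + T2) := by
    rw [div_le_iff₀ hnpos]
    have : 2 / (n:ℝ) * (T1 + T2) * n = 2 * T1 + 2 * T2 := by
      field_simp
    rw [this]
    nlinarith [sq_nonneg (∫ x, hSW μp πp rhat τ x)]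
  linarith
end

section
/- (Bias of the SWITCH estimator.) Fix a reward kernel D with mean reward r*(x,a), a measurable reward model r̂ : X×A → ℝ, and a threshold τ > 0. On n i.i.d. samples from P_μ^D, the expectation of the SWITCH estimator satisfies E[v̂_SWITCH] − v^π(D) = E_π[ (r̂(x,a) − r*(x,a)) · 1(ρ(x,a) > τ) ], where E_π denotes expectation over x ∼ λ, a ∼ π(·|x). -/
open MeasureTheory ProbabilityTheory Real
open scoped ENNReal BigOperators Classical

variable {X A : Type*} [MeasurableSpace X] [Fintype A] [Nonempty A]
  [MeasurableSpace A] [MeasurableSingletonClass A]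

section AuxSwitch

variable (lam : Measure X) (μp : Policy X A) (D : Kernel (X × A) ℝ)

noncomputable def nuA (a : A) : Measure X :=
  lam.withDensity fun x => ENNReal.ofReal (μp.prob x a)

lemma meas_mk_right (a : A) : Measurable fun x : X => (x, a) :=
  measurable_id.prodMk measurable_const

noncomputable def kA (a : A) : Kernel X ℝ := D.comap (fun x => (x, a)) (meas_mk_right a)

noncomputable def embA (a : A) : X × ℝ → (X × A) × ℝ := fun q => ((q.1, a), q.2)

instance nuA_sfinite [SFinite lam] (a : A) : SFinite (nuA lam μp a) := by
  unfold nuA; infer_instance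

instance kA_markov [IsMarkovKernel D] (a : A) : IsMarkovKernel (kA D a) := by
  unfold kA; infer_instance

lemma measEmb_embA (a : A) : MeasurableEmbedding (embA (X := X) (A := A) a) :=
  (measurableEmbedding_prod_mk_right a).prodMap MeasurableEmbedding.id

variable {lam μp D}

lemma measurable_kernel1 (μp : Policy X A) :
    Measurable fun x : X =>
      Measure.sum fun a : A => ENNReal.ofReal (μp.prob x a) • Measure.dirac (x, a) := by
  apply Measure.measurable_of_measurable_coe
  intro s hs
  have : (fun x : X =>
      (Measure.sum fun a : A => ENNReal.ofReal (μp.prob x a) • Measure.dirac (x, a)) s)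
      = fun x : X => ∑ a : A, ENNReal.ofReal (μp.prob x a) *
          Set.indicator {x : X | (x, a) ∈ s} (fun _ => (1 : ℝ≥0∞)) x := by
    funext x
    rw [Measure.sum_apply _ hs, tsum_fintype]
    congr 1
    funext a
    rw [Measure.smul_apply, smul_eq_mul, Measure.dirac_apply' _ hs]
    by_cases hx : (x, a) ∈ s <;> simp [Set.indicator, hx]
  rw [this]
  exact Finset.measurable_sum _ fun a _ =>
    ((μp.meas a).ennreal_ofReal).mul (measurable_one.indicator ((meas_mk_right a) hs))

lemma measurable_kernel2 (D : Kernel (X × A) ℝ) [IsMarkovKernel D] :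
    Measurable fun p : X × A => (D p).map fun r => (p, r) := by
  apply Measure.measurable_of_measurable_coe
  intro s hs
  simp_rw [Measure.map_apply measurable_prodMk_left hs]
  exact Kernel.measurable_kernel_prodMk_left hs

lemma sample_decomp [IsProbabilityMeasure lam] [IsMarkovKernel D] :
    sampleMeasure lam μp D =
      Measure.sum fun a : A => ((nuA lam μp a) ⊗ₘ (kA D a)).map (embA a) := by
  ext s hs
  have hg : Measurable fun p : X × A => D p (Prod.mk p ⁻¹' s) :=
    Kernel.measurable_kernel_prodMk_left hs
  rw [sampleMeasure, Measure.bind_apply hs (measurable_kernel2 D).aemeasurable]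
  have h1 : (fun p : X × A => ((D p).map fun r => (p, r)) s)
      = fun p : X × A => D p (Prod.mk p ⁻¹' s) := by
    funext p; rw [Measure.map_apply measurable_prodMk_left hs]
  rw [h1, Policy.joint, Measure.lintegral_bind (measurable_kernel1 μp).aemeasurable hg.aemeasurable]
  have h2 : ∀ x : X, (∫⁻ p, D p (Prod.mk p ⁻¹' s)
        ∂(Measure.sum fun a : A => ENNReal.ofReal (μp.prob x a) • Measure.dirac (x, a)))
      = ∑ a : A, ENNReal.ofReal (μp.prob x a) * D (x, a) (Prod.mk (x, a) ⁻¹' s) := by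
    intro x
    rw [lintegral_sum_measure, tsum_fintype]
    congr 1
    funext a
    rw [lintegral_smul_measure, lintegral_dirac' _ hg, smul_eq_mul]
  simp_rw [h2]
  have h3 : ∀ a : A, (Measure.map (embA a) (nuA lam μp a ⊗ₘ kA D a)) s
      = ∫⁻ x, ENNReal.ofReal (μp.prob x a) * D (x, a) (Prod.mk (x, a) ⁻¹' s) ∂lam := by
    intro a
    rw [Measure.map_apply (measEmb_embA a).measurable hs,
      Measure.compProd_apply ((measEmb_embA a).measurable hs)]
    have hset : ∀ x : X, Prod.mk x ⁻¹' (embA a ⁻¹' s) = Prod.mk (x, a) ⁻¹' s := fun x => rfl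
    have hker : (fun x : X => kA D a x (Prod.mk x ⁻¹' (embA a ⁻¹' s)))
        = fun x : X => D (x, a) (Prod.mk (x, a) ⁻¹' s) := by
      funext x; rw [hset, kA, Kernel.comap_apply]
    rw [hker, nuA,
      lintegral_withDensity_eq_lintegral_mul _ ((μp.meas a).ennreal_ofReal)
        (show Measurable fun x : X => D (x, a) (Prod.mk (x, a) ⁻¹' s) from
          hg.comp (meas_mk_right a))]
    rfl
  rw [Measure.sum_apply _ hs, tsum_fintype]
  simp_rw [h3]
  rw [← lintegral_finset_sum]
  intro a _
  exact ((μp.meas a).ennreal_ofReal).mul (hg.comp (meas_mk_right a))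

lemma sample_apply_preimage [IsProbabilityMeasure lam] [IsMarkovKernel D] {s : Set X}
    (hs : MeasurableSet s) :
    sampleMeasure lam μp D ((fun q : (X × A) × ℝ => q.1.1) ⁻¹' s) = lam s := by
  have hproj : Measurable fun q : (X × A) × ℝ => q.1.1 := measurable_fst.fst
  rw [sample_decomp, Measure.sum_apply _ (hproj hs), tsum_fintype]
  have key : ∀ a : A, (Measure.map (embA a) (nuA lam μp a ⊗ₘ kA D a))
      ((fun q : (X × A) × ℝ => q.1.1) ⁻¹' s) = nuA lam μp a s := by
    intro a
    rw [Measure.map_apply (measEmb_embA a).measurable (hproj hs)]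
    have hset : embA a ⁻¹' ((fun q : (X × A) × ℝ => q.1.1) ⁻¹' s) = s ×ˢ Set.univ := by
      ext q; simp [embA]
    rw [hset, Measure.compProd_apply (hs.prod MeasurableSet.univ)]
    have : ∀ x : X, kA D a x (Prod.mk x ⁻¹' s ×ˢ Set.univ)
        = s.indicator (fun _ => (1 : ℝ≥0∞)) x := by
      intro x
      by_cases hx : x ∈ s
      · simp [Set.mk_preimage_prod_left, hx]
      · simp [Set.mk_preimage_prod_left, hx]
    simp_rw [this]
    rw [lintegral_indicator hs, setLIntegral_one]
  simp_rw [key]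
  have : ∀ a : A, nuA lam μp a s = ∫⁻ x in s, ENNReal.ofReal (μp.prob x a) ∂lam := fun a =>
    withDensity_apply _ hs
  simp_rw [this]
  rw [← lintegral_finset_sum]
  · have : ∀ x : X, ∑ a : A, ENNReal.ofReal (μp.prob x a) = 1 := by
      intro x
      rw [← ENNReal.ofReal_sum_of_nonneg fun a _ => μp.nonneg x a, μp.sum_one x,
        ENNReal.ofReal_one]
    calc ∫⁻ x in s, ∑ a : A, ENNReal.ofReal (μp.prob x a) ∂lam
        = ∫⁻ _ in s, 1 ∂lam := by simp_rw [this]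
      _ = lam s := by rw [setLIntegral_one]
  · exact fun a _ => (μp.meas a).ennreal_ofReal

instance sample_prob [IsProbabilityMeasure lam] [IsMarkovKernel D] :
    IsProbabilityMeasure (sampleMeasure lam μp D) := by
  constructor
  have := sample_apply_preimage (lam := lam) (μp := μp) (D := D) MeasurableSet.univ
  simpa using this

lemma sample_map_proj [IsProbabilityMeasure lam] [IsMarkovKernel D] :
    (sampleMeasure lam μp D).map (fun q : (X × A) × ℝ => q.1.1) = lam := by
  ext s hs
  rw [Measure.map_apply measurable_fst.fst hs, sample_apply_preimage hs]

lemma integrable_slice [IsProbabilityMeasure lam] [IsMarkovKernel D]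
    {f : (X × A) × ℝ → ℝ} (hf : Integrable f (sampleMeasure lam μp D)) (a : A) :
    Integrable (fun x => μp.prob x a * ∫ r, f ((x, a), r) ∂(D (x, a))) lam := by
  have hfa : Integrable f ((Measure.map (embA a) (nuA lam μp a ⊗ₘ kA D a))) := by
    refine hf.mono_measure ?_
    rw [sample_decomp]
    exact Measure.le_sum _ a
  have hfc : Integrable (fun q : X × ℝ => f (embA a q)) (nuA lam μp a ⊗ₘ kA D a) :=
    (measEmb_embA a).integrable_map_iff.mp hfa
  have h1 : Integrable (fun x => ∫ r, f (embA a (x, r)) ∂(kA D a x)) (nuA lam μp a) := by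
    rw [Measure.compProd] at hfc
    have := MeasureTheory.Integrable.integral_compProd hfc
    simpa using this
  have h2 : Integrable (fun x => ∫ r, f ((x, a), r) ∂(D (x, a))) (nuA lam μp a) := by
    refine h1.congr (Filter.Eventually.of_forall fun x => ?_)
    simp only [kA, Kernel.comap_apply, embA]
  have h3 : nuA lam μp a
      = lam.withDensity (fun x => ((fun x => (μp.prob x a).toNNReal) x : ℝ≥0∞)) := rfl
  rw [h3] at h2
  have h4 := (integrable_withDensity_iff_integrable_smul
    ((μp.meas a).real_toNNReal) (g := fun x => ∫ r, f ((x, a), r) ∂(D (x, a)))).mp h2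
  refine h4.congr (Filter.Eventually.of_forall fun x => ?_)
  simp only [NNReal.smul_def, smul_eq_mul, Real.coe_toNNReal _ (μp.nonneg x a)]

lemma integral_sample [IsProbabilityMeasure lam] [IsMarkovKernel D]
    {f : (X × A) × ℝ → ℝ} (hf : Integrable f (sampleMeasure lam μp D)) :
    ∫ s, f s ∂(sampleMeasure lam μp D)
      = ∑ a : A, ∫ x, μp.prob x a * ∫ r, f ((x, a), r) ∂(D (x, a)) ∂lam := by
  have hdec := sample_decomp (lam := lam) (μp := μp) (D := D)
  have hfS : Integrable f
      (Measure.sum fun a : A => (Measure.map (embA a) (nuA lam μp a ⊗ₘ kA D a))) := by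
    rw [← hdec]; exact hf
  have key : ∀ a : A, ∫ s, f s ∂(Measure.map (embA a) (nuA lam μp a ⊗ₘ kA D a))
      = ∫ x, μp.prob x a * ∫ r, f ((x, a), r) ∂(D (x, a)) ∂lam := by
    intro a
    have hfa : Integrable f ((Measure.map (embA a) (nuA lam μp a ⊗ₘ kA D a))) :=
      hfS.mono_measure (Measure.le_sum _ a)
    have hfc : Integrable (fun q : X × ℝ => f (embA a q)) (nuA lam μp a ⊗ₘ kA D a) :=
      (measEmb_embA a).integrable_map_iff.mp hfa
    rw [integral_map (measEmb_embA a).measurable.aemeasurable hfa.aestronglyMeasurable,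
      Measure.integral_compProd hfc]
    have h2 : ∀ x : X, ∫ r, f (embA a (x, r)) ∂(kA D a x)
        = ∫ r, f ((x, a), r) ∂(D (x, a)) := by
      intro x; rw [kA, Kernel.comap_apply]; rfl
    simp_rw [h2]
    have h3 : nuA lam μp a
        = lam.withDensity (fun x => ((fun x => (μp.prob x a).toNNReal) x : ℝ≥0∞)) := rfl
    rw [h3, integral_withDensity_eq_integral_smul ((μp.meas a).real_toNNReal)]
    congr 1
    funext x
    rw [NNReal.smul_def, smul_eq_mul, Real.coe_toNNReal _ (μp.nonneg x a)]
  rw [hdec, integral_sum_measure hfS, tsum_fintype]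
  exact Finset.sum_congr rfl fun a _ => key a

end AuxSwitch

section PiEval

variable {Ω : Type*} [MeasurableSpace Ω]

lemma pi_map_eval {n : ℕ} (ν : Measure Ω) [IsProbabilityMeasure ν] (i : Fin n) :
    (Measure.pi fun _ : Fin n => ν).map (fun ω => ω i) = ν := by
  ext s hs
  rw [Measure.map_apply (measurable_pi_apply i) hs]
  have hset : (fun ω : Fin n → Ω => ω i) ⁻¹' s
      = Set.pi Set.univ (Function.update (fun _ : Fin n => (Set.univ : Set Ω)) i s) := by
    ext ω
    simp only [Set.mem_preimage, Set.mem_univ_pi, Function.update_apply]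
    constructor
    · intro h j
      by_cases hj : j = i
      · subst hj; simpa using h
      · simp [hj]
    · intro h
      have := h i
      simpa using this
  rw [hset, Measure.pi_pi]
  rw [Fintype.prod_eq_single i (fun j hj => by simp [Function.update_apply, hj])]
  simp

lemma integrable_eval {n : ℕ} (ν : Measure Ω) [IsProbabilityMeasure ν] (i : Fin n)
    {f : Ω → ℝ} (hf : Integrable f ν) :
    Integrable (fun ω : Fin n → Ω => f (ω i)) (Measure.pi fun _ : Fin n => ν) := by
  have hmap := pi_map_eval ν i
  have h1 : Integrable f ((Measure.pi fun _ : Fin n => ν).map (fun ω => ω i)) := by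
    rw [hmap]; exact hf
  exact (integrable_map_measure h1.aestronglyMeasurable
    (measurable_pi_apply i).aemeasurable).mp h1

lemma integral_eval {n : ℕ} (ν : Measure Ω) [IsProbabilityMeasure ν] (i : Fin n)
    {f : Ω → ℝ} (hf : Integrable f ν) :
    ∫ ω, f (ω i) ∂(Measure.pi fun _ : Fin n => ν) = ∫ y, f y ∂ν := by
  have hmap := pi_map_eval ν i
  have h1 : Integrable f ((Measure.pi fun _ : Fin n => ν).map (fun ω => ω i)) := by
    rw [hmap]; exact hf
  rw [← integral_map (measurable_pi_apply i).aemeasurable h1.aestronglyMeasurable, hmap]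

end PiEval

/-- Bias of the SWITCH estimator. -/
theorem switch_bias
    (lam : Measure X) [IsProbabilityMeasure lam] (μp πp : Policy X A)
    (habs : ∀ x a, 0 < πp.prob x a → 0 < μp.prob x a)
    (D : Kernel (X × A) ℝ) [IsMarkovKernel D]
    (hDint : ∀ p, Integrable (fun r => r) (D p))
    (rhat : X × A → ℝ) (hrm : Measurable rhat)
    (τ : ℝ) (hτ : 0 < τ) (n : ℕ) (hn : 0 < n)
    (hS : Integrable (switchEst μp πp rhat τ n)
      (Measure.pi fun _ : Fin n => sampleMeasure lam μp D))
    (hips : Integrable (fun s : (X × A) × ℝ =>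
      s.2 * impW μp πp s.1 * (if impW μp πp s.1 ≤ τ then 1 else 0)) (sampleMeasure lam μp D))
    (hvpi : Integrable (fun x => ∑ a, πp.prob x a * rstar D (x, a)) lam)
    (hlow : Integrable (fun x => ∑ a, πp.prob x a *
      (rstar D (x, a) * (if impW μp πp (x, a) ≤ τ then 1 else 0))) lam)
    (hdm : Integrable (fun x => ∑ a, πp.prob x a *
      (rhat (x, a) * (if τ < impW μp πp (x, a) then 1 else 0))) lam) :
    (∫ ω, switchEst μp πp rhat τ n ω
        ∂(Measure.pi fun _ : Fin n => sampleMeasure lam μp D)) - vpi lam πp D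
      = Epi lam πp
          (fun p => (rhat p - rstar D p) * (if τ < impW μp πp p then 1 else 0)) := by
  classical
  set L : X → ℝ := fun x => ∑ a, πp.prob x a *
      (rstar D (x, a) * (if impW μp πp (x, a) ≤ τ then 1 else 0)) with hL
  set Dm : X → ℝ := fun x => ∑ a, πp.prob x a *
      (rhat (x, a) * (if τ < impW μp πp (x, a) then 1 else 0)) with hDm
  set V : X → ℝ := fun x => ∑ a, πp.prob x a * rstar D (x, a) with hV
  set f1 : (X × A) × ℝ → ℝ := fun s => s.2 * impW μp πp s.1 *
      (if impW μp πp s.1 ≤ τ then 1 else 0) with hf1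
  set f2 : (X × A) × ℝ → ℝ := fun s => ∑ a, rhat (s.1.1, a) * πp.prob s.1.1 a *
      (if τ < impW μp πp (s.1.1, a) then 1 else 0) with hf2
  have hf2Dm : ∀ s : (X × A) × ℝ, f2 s = Dm s.1.1 := by
    intro s; rw [hf2, hDm]; exact Finset.sum_congr rfl fun a _ => by ring
  have hf2_int : Integrable f2 (sampleMeasure lam μp D) := by
    have h1 : Integrable Dm ((sampleMeasure lam μp D).map (fun q : (X × A) × ℝ => q.1.1)) := by
      rw [sample_map_proj]; exact hdm
    have h2 := (integrable_map_measure h1.aestronglyMeasurable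
      measurable_fst.fst.aemeasurable).mp h1
    exact h2.congr (Filter.Eventually.of_forall fun s => (hf2Dm s).symm)
  have hf1_int : Integrable f1 (sampleMeasure lam μp D) := hips
  have hinner1 : ∀ (x : X) (a : A), (∫ r, f1 ((x, a), r) ∂(D (x, a)))
      = rstar D (x, a) * (impW μp πp (x, a) * (if impW μp πp (x, a) ≤ τ then 1 else 0)) := by
    intro x a
    have h : (fun r : ℝ => f1 ((x, a), r)) = fun r : ℝ =>
        r * (impW μp πp (x, a) * (if impW μp πp (x, a) ≤ τ then 1 else 0)) := by
      funext r; rw [hf1]; ring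
    rw [h, integral_mul_const]
    rfl
  have hpoint : ∀ (x : X) (a : A), μp.prob x a * (rstar D (x, a) *
        (impW μp πp (x, a) * (if impW μp πp (x, a) ≤ τ then 1 else 0)))
      = πp.prob x a * (rstar D (x, a) * (if impW μp πp (x, a) ≤ τ then 1 else 0)) := by
    intro x a
    by_cases hμ : μp.prob x a = 0
    · have hπ : πp.prob x a = 0 := by
        by_contra h
        have h1 : 0 < πp.prob x a := lt_of_le_of_ne (πp.nonneg x a) (Ne.symm h)
        have h2 := habs x a h1
        rw [hμ] at h2; exact lt_irrefl 0 h2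
      simp [hμ, hπ]
    · have himp : impW μp πp (x, a) = πp.prob x a / μp.prob x a := rfl
      rw [himp]; field_simp
  have hterm1 : ∀ a : A, (fun x => μp.prob x a * ∫ r, f1 ((x, a), r) ∂(D (x, a)))
      = fun x => πp.prob x a * (rstar D (x, a) * (if impW μp πp (x, a) ≤ τ then 1 else 0)) := by
    intro a; funext x; rw [hinner1 x a, hpoint x a]
  have hI1 : ∫ s, f1 s ∂(sampleMeasure lam μp D) = ∫ x, L x ∂lam := by
    rw [integral_sample hf1_int]
    calc ∑ a : A, ∫ x, μp.prob x a * ∫ r, f1 ((x, a), r) ∂(D (x, a)) ∂lam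
        = ∑ a : A, ∫ x, πp.prob x a *
            (rstar D (x, a) * (if impW μp πp (x, a) ≤ τ then 1 else 0)) ∂lam :=
          Finset.sum_congr rfl fun a _ => by rw [hterm1 a]
      _ = ∫ x, L x ∂lam := by
          rw [hL, ← integral_finset_sum]
          intro a _
          have h := integrable_slice hf1_int a
          rw [hterm1 a] at h
          exact h
  have hterm2 : ∀ a : A, (fun x => μp.prob x a * ∫ r, f2 ((x, a), r) ∂(D (x, a)))
      = fun x => μp.prob x a * Dm x := by
    intro a; funext x
    congr 1
    have h : (fun r : ℝ => f2 ((x, a), r)) = fun _ : ℝ => Dm x := by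
      funext r; exact hf2Dm ((x, a), r)
    rw [h, integral_const]
    simp [measure_univ]
  have hI2 : ∫ s, f2 s ∂(sampleMeasure lam μp D) = ∫ x, Dm x ∂lam := by
    rw [integral_sample hf2_int]
    have hint : ∀ a : A, Integrable (fun x => μp.prob x a * Dm x) lam := by
      intro a
      have h := integrable_slice hf2_int a
      rw [hterm2 a] at h
      exact h
    calc ∑ a : A, ∫ x, μp.prob x a * ∫ r, f2 ((x, a), r) ∂(D (x, a)) ∂lam
        = ∑ a : A, ∫ x, μp.prob x a * Dm x ∂lam :=
          Finset.sum_congr rfl fun a _ => by rw [hterm2 a]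
      _ = ∫ x, ∑ a : A, μp.prob x a * Dm x ∂lam :=
          (integral_finset_sum _ fun a _ => hint a).symm
      _ = ∫ x, Dm x ∂lam := by
          congr 1; funext x
          rw [← Finset.sum_mul, μp.sum_one, one_mul]
  set P := Measure.pi fun _ : Fin n => sampleMeasure lam μp D with hP
  haveI : IsProbabilityMeasure (sampleMeasure lam μp D) := sample_prob
  have hg1 : ∀ i : Fin n, Integrable (fun ω : Fin n → (X × A) × ℝ => f1 (ω i)) P :=
    fun i => integrable_eval _ i hf1_int
  have hg2 : ∀ i : Fin n, Integrable (fun ω : Fin n → (X × A) × ℝ => f2 (ω i)) P :=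
    fun i => integrable_eval _ i hf2_int
  have hnR : (n : ℝ) ≠ 0 := Nat.cast_ne_zero.mpr hn.ne'
  have hEswitch : ∫ ω, switchEst μp πp rhat τ n ω ∂P
      = ∫ x, L x ∂lam + ∫ x, Dm x ∂lam := by
    have hsw : ∀ ω : Fin n → (X × A) × ℝ, switchEst μp πp rhat τ n ω
        = (1 / n : ℝ) * ∑ i, f1 (ω i) + (1 / n : ℝ) * ∑ i, f2 (ω i) := fun ω => rfl
    calc ∫ ω, switchEst μp πp rhat τ n ω ∂P
        = ∫ ω, ((1 / n : ℝ) * ∑ i, f1 (ω i) + (1 / n : ℝ) * ∑ i, f2 (ω i)) ∂P := by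
          exact integral_congr_ae (Filter.Eventually.of_forall hsw)
      _ = (1 / n : ℝ) * ∑ i, ∫ ω, f1 (ω i) ∂P + (1 / n : ℝ) * ∑ i, ∫ ω, f2 (ω i) ∂P := by
          rw [integral_add ((integrable_finset_sum _ fun i _ => hg1 i).const_mul _)
            ((integrable_finset_sum _ fun i _ => hg2 i).const_mul _),
            integral_const_mul, integral_const_mul,
            integral_finset_sum _ (fun i _ => hg1 i), integral_finset_sum _ (fun i _ => hg2 i)]
      _ = (1 / n : ℝ) * (n * ∫ s, f1 s ∂(sampleMeasure lam μp D))
          + (1 / n : ℝ) * (n * ∫ s, f2 s ∂(sampleMeasure lam μp D)) := by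
          congr 1
          · congr 1
            rw [Finset.sum_congr rfl fun i _ => integral_eval _ i hf1_int]
            simp [Finset.sum_const, mul_comm]
          · congr 1
            rw [Finset.sum_congr rfl fun i _ => integral_eval _ i hf2_int]
            simp [Finset.sum_const, mul_comm]
      _ = ∫ x, L x ∂lam + ∫ x, Dm x ∂lam := by
          rw [hI1, hI2]
          field_simp
  have hVeq : vpi lam πp D = ∫ x, V x ∂lam := rfl
  have hRHS : Epi lam πp
      (fun p => (rhat p - rstar D p) * (if τ < impW μp πp p then 1 else 0))
      = ∫ x, Dm x ∂lam + (∫ x, L x ∂lam - ∫ x, V x ∂lam) := by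
    have hE : (fun x => ∑ a, πp.prob x a *
        ((rhat (x, a) - rstar D (x, a)) * (if τ < impW μp πp (x, a) then 1 else 0)))
        = fun x => Dm x + (L x - V x) := by
      funext x
      rw [hDm, hL, hV, ← Finset.sum_sub_distrib, ← Finset.sum_add_distrib]
      refine Finset.sum_congr rfl fun a _ => ?_
      by_cases hc : impW μp πp (x, a) ≤ τ
      · rw [if_pos hc, if_neg (not_lt.mpr hc)]; ring
      · rw [if_neg hc, if_pos (not_le.mp hc)]; ring
    calc Epi lam πp (fun p => (rhat p - rstar D p) * (if τ < impW μp πp p then 1 else 0))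
        = ∫ x, (Dm x + (L x - V x)) ∂lam := by
          show (∫ x, ∑ a, πp.prob x a *
            ((rhat (x, a) - rstar D (x, a)) * (if τ < impW μp πp (x, a) then 1 else 0)) ∂lam) = _
          rw [show (fun x => ∑ a, πp.prob x a *
            ((rhat (x, a) - rstar D (x, a)) * (if τ < impW μp πp (x, a) then 1 else 0)))
            = fun x => Dm x + (L x - V x) from hE]
      _ = ∫ x, Dm x ∂lam + ∫ x, (L x - V x) ∂lam := integral_add hdm (hlow.sub hvpi)
      _ = ∫ x, Dm x ∂lam + (∫ x, L x ∂lam - ∫ x, V x ∂lam) := by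
          congr 1
          exact integral_sub hlow hvpi
  rw [hEswitch, hVeq, hRHS]
  ring
end

section
/- (Le Cam's two-point method.) Let Ω be a measurable space, P₀ and P₁ probability measures on Ω, (M, d) a (pseudo)metric space, and θ₀, θ₁ ∈ M with Δ = d(θ₀, θ₁). Then for every n ≥ 1 and every measurable estimator θ̂ : Ωⁿ → M, max_{i ∈ {0,1}} E_{P_i^{⊗n}}[ d(θ̂, θ_i) ] ≥ (Δ/8) · exp( −n · D_KL(P₀ ‖ P₁) ), where D_KL denotes the Kullback–Leibler divergence. -/
open MeasureTheory Real
open scoped ENNReal Classical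

/-- Kullback–Leibler divergence: `∫ log(dP/dQ) dP` when `P ≪ Q` and the log-density is
integrable, and `+∞` otherwise. -/
noncomputable def klDiv {α : Type*} [MeasurableSpace α] (P Q : Measure α) : EReal :=
  if P ≪ Q ∧ Integrable (fun x => Real.log (P.rnDeriv Q x).toReal) P
  then ((∫ x, Real.log (P.rnDeriv Q x).toReal ∂P : ℝ) : EReal)
  else ⊤


section LeCamAux

variable {Ω : Type*} [MeasurableSpace Ω]

lemma leCam_lintegral_pi_prod {n : ℕ} (μ : Measure Ω) [IsProbabilityMeasure μ]
    (f : Fin n → Ω → ℝ≥0∞) (hf : ∀ i, Measurable (f i)) :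
    ∫⁻ x, ∏ i, f i (x i) ∂(Measure.pi fun _ : Fin n => μ) = ∏ i, ∫⁻ a, f i a ∂μ := by
  induction n with
  | zero => simp
  | succ n ih =>
    have hmp := (measurePreserving_piFinSuccAbove (fun _ : Fin (n + 1) => μ) 0).symm
    have hF : Measurable fun x : Fin (n + 1) → Ω => ∏ i, f i (x i) :=
      Finset.measurable_prod _ fun i _ => (hf i).comp (measurable_pi_apply i)
    have h1 := hmp.lintegral_comp hF
    rw [← h1]
    have h2 : ∀ y : Ω × (Fin n → Ω),
        (∏ i, f i (((MeasurableEquiv.piFinSuccAbove (fun _ : Fin (n + 1) => Ω) 0).symm y) i))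
          = f 0 y.1 * ∏ j, f j.succ (y.2 j) := by
      rintro ⟨a, x⟩
      simp_rw [MeasurableEquiv.piFinSuccAbove_symm_apply, Fin.insertNthEquiv,
        Equiv.coe_fn_mk, Fin.prod_univ_succ, Fin.insertNth_zero, Fin.cons_zero, Fin.cons_succ, cast_eq]
    simp_rw [h2]
    rw [lintegral_prod_mul (μ := μ) (ν := Measure.pi fun _ : Fin n => μ) (f := f 0)
      (g := fun y => ∏ j, f j.succ (y j)) ((hf 0).aemeasurable)
      ((Finset.measurable_prod _ fun j _ => (hf j.succ).comp (measurable_pi_apply j)).aemeasurable),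
      ih (fun j => f j.succ) (fun j => hf j.succ), Fin.prod_univ_succ]

lemma leCam_pi_withDensity {n : ℕ} (P Q : Measure Ω) [IsProbabilityMeasure P]
    [IsProbabilityMeasure Q] (p : Ω → ℝ≥0∞) (hp : Measurable p) (h : Q.withDensity p = P) :
    (Measure.pi fun _ : Fin n => Q).withDensity (fun x => ∏ i, p (x i))
      = Measure.pi fun _ : Fin n => P := by
  refine (Measure.pi_eq fun s hs => ?_).symm
  rw [withDensity_apply _ (MeasurableSet.univ_pi hs),
    ← lintegral_indicator (MeasurableSet.univ_pi hs) (fun x => ∏ i, p (x i))]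
  have hind : ∀ x : Fin n → Ω, (Set.pi Set.univ s).indicator (fun x => ∏ i, p (x i)) x
      = ∏ i, (s i).indicator p (x i) := by
    intro x
    by_cases hx : x ∈ Set.pi Set.univ s
    · rw [Set.indicator_of_mem hx]
      exact Finset.prod_congr rfl fun i _ =>
        (Set.indicator_of_mem (hx i (Set.mem_univ i)) p).symm
    · rw [Set.indicator_of_notMem hx]
      rw [Set.mem_univ_pi] at hx
      push_neg at hx
      obtain ⟨i, hi⟩ := hx
      exact (Finset.prod_eq_zero (Finset.mem_univ i)
        (Set.indicator_of_notMem hi p)).symm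
  simp_rw [hind]
  rw [leCam_lintegral_pi_prod Q _ (fun i => hp.indicator (hs i))]
  refine Finset.prod_congr rfl fun i _ => ?_
  rw [lintegral_indicator (hs i) p, ← withDensity_apply p (hs i), h]

end LeCamAux

section LeCamAux2

variable {α : Type*} [MeasurableSpace α]

lemma leCam_CS (μ : Measure α) (g : α → ℝ≥0∞) (hg : Measurable g) :
    ∫⁻ x, g x ∂μ ≤ (μ Set.univ) ^ (1/2 : ℝ) * (∫⁻ x, g x ^ (2 : ℝ) ∂μ) ^ (1/2 : ℝ) := by
  have hpq : Real.HolderConjugate 2 2 := ⟨by norm_num, by norm_num, by norm_num⟩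
  have h := ENNReal.lintegral_mul_le_Lp_mul_Lq μ hpq
    (aemeasurable_const (b := (1 : ℝ≥0∞))) hg.aemeasurable
  simpa using h

end LeCamAux2

section LeCamJensen

variable {Ω : Type*} [MeasurableSpace Ω]

/-- Jensen step: `exp (-KL/2) ≤ (∫⁻ √(dP/dQ) dQ).toReal` plus basic facts. -/
lemma leCam_jensen (P Q : Measure Ω) [IsProbabilityMeasure P] [IsProbabilityMeasure Q]
    (hac : P ≪ Q) (hInt : Integrable (fun x => Real.log (P.rnDeriv Q x).toReal) P) :
    Real.exp (-(∫ x, Real.log (P.rnDeriv Q x).toReal ∂P) / 2)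
      ≤ (∫⁻ x, (P.rnDeriv Q x) ^ (1/2 : ℝ) ∂Q).toReal := by
  set p := P.rnDeriv Q with hp_def
  have hp : Measurable p := Measure.measurable_rnDeriv P Q
  have hwd : Q.withDensity p = P := Measure.withDensity_rnDeriv_eq P Q hac
  -- a.e. positivity and finiteness under P
  have hpos : ∀ᵐ x ∂P, 0 < p x := Measure.rnDeriv_pos hac
  have hfin : ∀ᵐ x ∂P, p x < ∞ := hac.ae_le (Measure.rnDeriv_lt_top P Q)
  have hfinQ : ∀ᵐ x ∂Q, p x < ∞ := Measure.rnDeriv_lt_top P Q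
  -- change of measure
  have hchg : ∫⁻ x, p x ^ (-(1/2) : ℝ) ∂P = ∫⁻ x, p x ^ (1/2 : ℝ) ∂Q := by
    rw [← hwd, lintegral_withDensity_eq_lintegral_mul _ hp (hp.pow_const _)]
    refine lintegral_congr_ae (hfinQ.mono fun x hx => ?_)
    show p x * p x ^ (-(1/2) : ℝ) = p x ^ (1/2 : ℝ)
    rcases eq_or_ne (p x) 0 with h0 | h0
    · rw [h0, ENNReal.zero_rpow_of_neg (by norm_num), ENNReal.zero_rpow_of_pos (by norm_num)]
      simp
    · have : p x * p x ^ (-(1/2) : ℝ) = p x ^ ((1 : ℝ) + -(1/2)) := by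
        rw [ENNReal.rpow_add _ _ h0 hx.ne, ENNReal.rpow_one]
      simpa using this.trans (by norm_num)
  set r : ℝ≥0∞ := ∫⁻ x, p x ^ (1/2 : ℝ) ∂Q with hr_def
  -- r ≤ 1
  have hr_le_one : r ≤ 1 := by
    have := leCam_CS Q (fun x => p x ^ (1/2 : ℝ)) (hp.pow_const _)
    simp only [measure_univ, ENNReal.one_rpow, one_mul] at this
    have h2 : ∀ x, (p x ^ (1/2 : ℝ)) ^ (2 : ℝ) = p x := by
      intro x
      rw [← ENNReal.rpow_mul]
      norm_num
    rw [hr_def]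
    refine this.trans ?_
    simp_rw [h2]
    calc (∫⁻ x, p x ∂Q) ^ (1/2 : ℝ) ≤ (P Set.univ) ^ (1/2 : ℝ) :=
          ENNReal.rpow_le_rpow (Measure.lintegral_rnDeriv_le) (by norm_num)
    _ = 1 := by simp
  have hr_ne_top : r ≠ ∞ := (hr_le_one.trans_lt ENNReal.one_lt_top).ne
  -- the real function F
  set F : Ω → ℝ := fun x => Real.exp (-(1/2) * Real.log (p x).toReal) with hF_def
  have hF_meas : Measurable F := (((hp.ennreal_toReal).log).const_mul _).exp
  have hF_nonneg : ∀ x, 0 ≤ F x := fun x => (Real.exp_pos _).le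
  have hF_eq : ∀ᵐ x ∂P, ENNReal.ofReal (F x) = p x ^ (-(1/2) : ℝ) := by
    filter_upwards [hpos, hfin] with x hx0 hxt
    have ht0 : 0 < (p x).toReal := ENNReal.toReal_pos hx0.ne' hxt.ne
    show ENNReal.ofReal (Real.exp (-(1/2) * Real.log (p x).toReal)) = p x ^ (-(1/2) : ℝ)
    have : Real.exp (-(1/2) * Real.log (p x).toReal) = (p x).toReal ^ (-(1/2) : ℝ) := by
      rw [Real.rpow_def_of_pos ht0, mul_comm]
    rw [this, ← ENNReal.ofReal_rpow_of_pos ht0, ENNReal.ofReal_toReal hxt.ne]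
  have hFlint : ∫⁻ x, ENNReal.ofReal (F x) ∂P = r := by
    rw [lintegral_congr_ae hF_eq, hchg]
  -- F is integrable
  have hF_int : Integrable F P := by
    refine ⟨hF_meas.aestronglyMeasurable, ?_⟩
    rw [hasFiniteIntegral_iff_norm]
    have : ∀ x, ENNReal.ofReal ‖F x‖ = ENNReal.ofReal (F x) := by
      intro x; rw [Real.norm_eq_abs, abs_of_nonneg (hF_nonneg x)]
    simp_rw [this, hFlint]
    exact hr_ne_top.lt_top
  -- ∫ F = r.toReal
  have hF_integral : ∫ x, F x ∂P = r.toReal := by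
    rw [integral_eq_lintegral_of_nonneg_ae (Filter.Eventually.of_forall hF_nonneg)
      hF_meas.aestronglyMeasurable, hFlint]
  -- Jensen
  have hjen := ConvexOn.map_integral_le (μ := P) (s := Set.univ) (g := Real.exp)
    (f := fun x => -(1/2) * Real.log (p x).toReal) convexOn_exp
    Real.continuous_exp.continuousOn isClosed_univ
    (Filter.Eventually.of_forall fun x => Set.mem_univ _)
    (hInt.const_mul _) (by exact hF_int)
  rw [integral_const_mul] at hjen
  have : -(∫ x, Real.log (p x).toReal ∂P) / 2 = -(1/2) * ∫ x, Real.log (p x).toReal ∂P := by ring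
  rw [this]
  exact hjen.trans_eq hF_integral

end LeCamJensen

/-- Le Cam's two-point method. -/
theorem le_cam_two_point
    {Ω : Type*} [MeasurableSpace Ω] (P₀ P₁ : Measure Ω)
    [IsProbabilityMeasure P₀] [IsProbabilityMeasure P₁]
    {M : Type*} [PseudoMetricSpace M] [MeasurableSpace M] [BorelSpace M]
    (θ₀ θ₁ : M) (Δ : ℝ) (hΔ : Δ = dist θ₀ θ₁)
    (n : ℕ) (hn : 1 ≤ n)
    (θhat : (Fin n → Ω) → M) (hθ : Measurable θhat) :
    ENNReal.ofReal (Δ / 8 *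
        (if klDiv P₀ P₁ = ⊤ then 0 else Real.exp (-(n : ℝ) * (klDiv P₀ P₁).toReal)))
      ≤ max (∫⁻ ω, ENNReal.ofReal (dist (θhat ω) θ₀) ∂(Measure.pi fun _ : Fin n => P₀))
            (∫⁻ ω, ENNReal.ofReal (dist (θhat ω) θ₁) ∂(Measure.pi fun _ : Fin n => P₁)) := by
  by_cases htop : klDiv P₀ P₁ = ⊤
  · simp [htop]
  rw [if_neg htop]
  have hcond : P₀ ≪ P₁ ∧ Integrable (fun x => Real.log (P₀.rnDeriv P₁ x).toReal) P₀ := by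
    by_contra hc
    exact htop (by rw [klDiv, if_neg hc])
  obtain ⟨hac, hInt⟩ := hcond
  set KL : ℝ := ∫ x, Real.log (P₀.rnDeriv P₁ x).toReal ∂P₀ with hKL_def
  have hkl_eq : klDiv P₀ P₁ = (KL : EReal) := by rw [klDiv, if_pos ⟨hac, hInt⟩]
  rw [hkl_eq, EReal.toReal_coe]
  -- setup
  set p := P₀.rnDeriv P₁ with hp_def
  have hp : Measurable p := Measure.measurable_rnDeriv P₀ P₁
  have hwd : P₁.withDensity p = P₀ := Measure.withDensity_rnDeriv_eq P₀ P₁ hac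
  set Pn : Measure (Fin n → Ω) := Measure.pi fun _ : Fin n => P₀ with hPn_def
  set Qn : Measure (Fin n → Ω) := Measure.pi fun _ : Fin n => P₁ with hQn_def
  have hd0 : Measurable fun x : Fin n → Ω => dist (θhat x) θ₀ :=
    (Continuous.dist continuous_id continuous_const).measurable.comp hθ
  have hd1 : Measurable fun x : Fin n → Ω => dist (θhat x) θ₁ :=
    (Continuous.dist continuous_id continuous_const).measurable.comp hθ
  set A : Set (Fin n → Ω) := {x | dist (θhat x) θ₁ ≤ dist (θhat x) θ₀} with hA_def
  have hA : MeasurableSet A := measurableSet_le hd1 hd0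
  have hΔ0 : 0 ≤ Δ := hΔ ▸ dist_nonneg
  -- the two reduction inequalities
  have h₀ : ENNReal.ofReal (Δ / 2) * Pn A
      ≤ ∫⁻ ω, ENNReal.ofReal (dist (θhat ω) θ₀) ∂Pn := by
    calc ENNReal.ofReal (Δ / 2) * Pn A
        = ∫⁻ _ in A, ENNReal.ofReal (Δ / 2) ∂Pn := by rw [setLIntegral_const]
      _ ≤ ∫⁻ x in A, ENNReal.ofReal (dist (θhat x) θ₀) ∂Pn := by
          refine setLIntegral_mono hd0.ennreal_ofReal fun x hx => ?_
          refine ENNReal.ofReal_le_ofReal ?_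
          have h1 : dist θ₀ θ₁ ≤ dist θ₀ (θhat x) + dist (θhat x) θ₁ := dist_triangle _ _ _
          have hx' : dist (θhat x) θ₁ ≤ dist (θhat x) θ₀ := hx
          rw [dist_comm θ₀ (θhat x)] at h1
          rw [hΔ]; linarith
      _ ≤ _ := setLIntegral_le_lintegral _ _
  have h₁ : ENNReal.ofReal (Δ / 2) * Qn Aᶜ
      ≤ ∫⁻ ω, ENNReal.ofReal (dist (θhat ω) θ₁) ∂Qn := by
    calc ENNReal.ofReal (Δ / 2) * Qn Aᶜ
        = ∫⁻ _ in Aᶜ, ENNReal.ofReal (Δ / 2) ∂Qn := by rw [setLIntegral_const]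
      _ ≤ ∫⁻ x in Aᶜ, ENNReal.ofReal (dist (θhat x) θ₁) ∂Qn := by
          refine setLIntegral_mono hd1.ennreal_ofReal fun x hx => ?_
          refine ENNReal.ofReal_le_ofReal ?_
          have h1 : dist θ₀ θ₁ ≤ dist θ₀ (θhat x) + dist (θhat x) θ₁ := dist_triangle _ _ _
          have hx' : dist (θhat x) θ₀ ≤ dist (θhat x) θ₁ := le_of_lt (lt_of_not_ge hx)
          rw [dist_comm θ₀ (θhat x)] at h1
          rw [hΔ]; linarith
      _ ≤ _ := setLIntegral_le_lintegral _ _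
  -- Hellinger affinity machinery
  set g : (Fin n → Ω) → ℝ≥0∞ := fun x => ∏ i, p (x i) ^ (1/2 : ℝ) with hg_def
  have hgm : Measurable g :=
    Finset.measurable_prod _ fun i _ => (hp.comp (measurable_pi_apply i)).pow_const _
  have hhalf : ∀ a : ℝ≥0∞, a ^ (1/2 : ℝ) * a ^ (1/2 : ℝ) = a := by
    intro a
    rcases eq_or_ne a 0 with h | h
    · rw [h, ENNReal.zero_rpow_of_pos (by norm_num), mul_zero]
    rcases eq_or_ne a ∞ with h' | h'
    · rw [h', ENNReal.top_rpow_of_pos (by norm_num), ENNReal.top_mul_top]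
    · rw [← ENNReal.rpow_add _ _ h h']
      norm_num
  have hg2 : ∀ x, g x ^ (2 : ℝ) = ∏ i, p (x i) := by
    intro x
    have h2 : ((2 : ℕ) : ℝ) = (2 : ℝ) := by norm_num
    rw [hg_def, ← h2, ENNReal.rpow_natCast, sq, ← Finset.prod_mul_distrib]
    exact Finset.prod_congr rfl fun i _ => hhalf _
  have hdens : Qn.withDensity (fun x => ∏ i, p (x i)) = Pn :=
    leCam_pi_withDensity P₀ P₁ p hp hwd
  have hsetint : ∀ B : Set (Fin n → Ω), MeasurableSet B →
      ∫⁻ x in B, (∏ i, p (x i)) ∂Qn = Pn B := by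
    intro B hB
    rw [← hdens, withDensity_apply _ hB]
  have hCS : ∀ B : Set (Fin n → Ω), MeasurableSet B →
      ∫⁻ x in B, g x ∂Qn ≤ (Qn B) ^ (1/2 : ℝ) * (Pn B) ^ (1/2 : ℝ) := by
    intro B hB
    have hcs := leCam_CS (Qn.restrict B) g hgm
    rw [Measure.restrict_apply_univ] at hcs
    have h2 : ∫⁻ x in B, g x ^ (2 : ℝ) ∂Qn = Pn B := by
      simp_rw [hg2]; exact hsetint B hB
    rwa [h2] at hcs
  set r : ℝ≥0∞ := ∫⁻ x, p x ^ (1/2 : ℝ) ∂P₁ with hr_def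
  have htensor : ∫⁻ x, g x ∂Qn = r ^ n := by
    rw [hQn_def, leCam_lintegral_pi_prod P₁ (fun _ a => p a ^ (1/2 : ℝ))
      (fun _ => hp.pow_const _)]
    simp only [Finset.prod_const, Finset.card_univ, Fintype.card_fin]
    rfl
  have hr_le_one : r ≤ 1 := by
    have hcs := leCam_CS P₁ (fun x => p x ^ (1/2 : ℝ)) (hp.pow_const _)
    simp only [measure_univ, ENNReal.one_rpow, one_mul] at hcs
    have h2 : ∀ x : Ω, (p x ^ (1/2 : ℝ)) ^ (2 : ℝ) = p x := by
      intro x; rw [← ENNReal.rpow_mul]; norm_num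
    refine hcs.trans ?_
    simp_rw [h2]
    calc (∫⁻ x, p x ∂P₁) ^ (1/2 : ℝ) ≤ (P₀ Set.univ) ^ (1/2 : ℝ) :=
          ENNReal.rpow_le_rpow Measure.lintegral_rnDeriv_le (by norm_num)
      _ = 1 := by simp
  have hsplit : r ^ n ≤ (Pn A) ^ (1/2 : ℝ) + (Qn Aᶜ) ^ (1/2 : ℝ) := by
    rw [← htensor, ← lintegral_add_compl g hA]
    refine add_le_add ?_ ?_
    · refine (hCS A hA).trans ?_
      calc (Qn A) ^ (1/2 : ℝ) * (Pn A) ^ (1/2 : ℝ)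
          ≤ 1 * (Pn A) ^ (1/2 : ℝ) := by
            refine mul_le_mul_left ?_ _
            calc (Qn A) ^ (1/2 : ℝ) ≤ (1 : ℝ≥0∞) ^ (1/2 : ℝ) :=
                  ENNReal.rpow_le_rpow prob_le_one (by norm_num)
              _ = 1 := ENNReal.one_rpow _
        _ = _ := one_mul _
    · refine (hCS Aᶜ hA.compl).trans ?_
      calc (Qn Aᶜ) ^ (1/2 : ℝ) * (Pn Aᶜ) ^ (1/2 : ℝ)
          ≤ (Qn Aᶜ) ^ (1/2 : ℝ) * 1 := by
            refine mul_le_mul_right ?_ _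
            calc (Pn Aᶜ) ^ (1/2 : ℝ) ≤ (1 : ℝ≥0∞) ^ (1/2 : ℝ) :=
                  ENNReal.rpow_le_rpow prob_le_one (by norm_num)
              _ = 1 := ENNReal.one_rpow _
        _ = _ := mul_one _
  -- move to the reals
  set a : ℝ := (Pn A).toReal with ha_def
  set b : ℝ := (Qn Aᶜ).toReal with hb_def
  have ha0 : 0 ≤ a := ENNReal.toReal_nonneg
  have hb0 : 0 ≤ b := ENNReal.toReal_nonneg
  have hjen : Real.exp (-KL / 2) ≤ r.toReal := leCam_jensen P₀ P₁ hac hInt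
  have hrpowfin : ∀ (c : ℝ≥0∞), c ≠ ∞ → c ^ (1/2 : ℝ) ≠ ∞ := fun c hc =>
    ENNReal.rpow_ne_top_of_nonneg (by norm_num) hc
  have hsplit' : r.toReal ^ n ≤ Real.sqrt a + Real.sqrt b := by
    have hfin1 : (Pn A) ^ (1/2 : ℝ) ≠ ∞ := hrpowfin _ (measure_ne_top _ _)
    have hfin2 : (Qn Aᶜ) ^ (1/2 : ℝ) ≠ ∞ := hrpowfin _ (measure_ne_top _ _)
    have := ENNReal.toReal_mono (by exact ENNReal.add_ne_top.2 ⟨hfin1, hfin2⟩) hsplit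
    rw [ENNReal.toReal_pow] at this
    rw [ENNReal.toReal_add hfin1 hfin2] at this
    refine this.trans_eq ?_
    rw [← ENNReal.toReal_rpow, ← ENNReal.toReal_rpow,
      Real.sqrt_eq_rpow, Real.sqrt_eq_rpow]
  have hkey : Real.exp (-(n : ℝ) * KL) ≤ 2 * (a + b) := by
    have e1 : Real.exp (-(n : ℝ) * KL) = Real.exp (-KL / 2) ^ (2 * n) := by
      rw [← Real.exp_nat_mul]
      congr 1
      push_cast
      ring
    have e2 : Real.exp (-KL / 2) ^ (2 * n) ≤ r.toReal ^ (2 * n) :=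
      pow_le_pow_left₀ (Real.exp_nonneg _) hjen _
    have e3 : r.toReal ^ (2 * n) = (r.toReal ^ n) ^ 2 := by
      rw [← pow_mul]; ring_nf
    have e4 : (r.toReal ^ n) ^ 2 ≤ (Real.sqrt a + Real.sqrt b) ^ 2 := by
      refine pow_le_pow_left₀ (pow_nonneg ENNReal.toReal_nonneg n) hsplit' 2
    have e5 : (Real.sqrt a + Real.sqrt b) ^ 2 ≤ 2 * (a + b) := by
      nlinarith [Real.sq_sqrt ha0, Real.sq_sqrt hb0, sq_nonneg (Real.sqrt a - Real.sqrt b),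
        Real.sqrt_nonneg a, Real.sqrt_nonneg b]
    calc Real.exp (-(n : ℝ) * KL) = Real.exp (-KL / 2) ^ (2 * n) := e1
      _ ≤ r.toReal ^ (2 * n) := e2
      _ = (r.toReal ^ n) ^ 2 := e3
      _ ≤ (Real.sqrt a + Real.sqrt b) ^ 2 := e4
      _ ≤ 2 * (a + b) := e5
  have hfinal_real : Δ / 8 * Real.exp (-(n : ℝ) * KL) ≤ Δ / 2 * max a b := by
    have h2 : a + b ≤ 2 * max a b := by
      rcases le_total a b with h | h
      · rw [max_eq_right h]; linarith
      · rw [max_eq_left h]; linarith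
    calc Δ / 8 * Real.exp (-(n : ℝ) * KL) ≤ Δ / 8 * (2 * (a + b)) := by
          refine mul_le_mul_of_nonneg_left hkey (by positivity)
      _ ≤ Δ / 8 * (2 * (2 * max a b)) := by
          refine mul_le_mul_of_nonneg_left (by linarith) (by positivity)
      _ = Δ / 2 * max a b := by ring
  calc ENNReal.ofReal (Δ / 8 * Real.exp (-(n : ℝ) * KL))
      ≤ ENNReal.ofReal (Δ / 2 * max a b) := ENNReal.ofReal_le_ofReal hfinal_real
    _ ≤ max (ENNReal.ofReal (Δ / 2) * Pn A) (ENNReal.ofReal (Δ / 2) * Qn Aᶜ) := by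
        rcases le_total a b with h | h
        · rw [max_eq_right h]
          refine le_max_of_le_right ?_
          rw [ENNReal.ofReal_mul (by positivity), hb_def,
            ENNReal.ofReal_toReal (measure_ne_top _ _)]
        · rw [max_eq_left h]
          refine le_max_of_le_left ?_
          rw [ENNReal.ofReal_mul (by positivity), ha_def,
            ENNReal.ofReal_toReal (measure_ne_top _ _)]
    _ ≤ _ := max_le_max h₀ h₁
end

section
/- (Discretization/partition lemma.) Let Z be a measurable subset of ℝ^d, μ a probability measure on Z, and Rmax, ρ : Z → [0,∞) measurable. Given γ ∈ [0,1], define ξ_γ(z) = 1(μ({z}) ≤ γ). Then for any δ ∈ (0,1] there exist a countable index set I, pairwise disjoint measurable sets B_i ⊆ Z with ⋃_{i∈I} B_i = Z, and nonnegative reals R_i, ρ_i and ξ_i ∈ {0,1} for each i ∈ I, such that: (1) for all z ∈ B_i, Rmax(z)² ∈ [R_i², (1+δ)·R_i²], ρ(z)² ∈ [ρ_i², (1+δ)·ρ_i²], and ξ_γ(z) = ξ_i; (2) each B_i either satisfies μ(B_i) ≤ δ or is a singleton {z}. -/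
open MeasureTheory
open scoped ENNReal Classical

lemma level_cells {α : Type*} [MeasurableSpace α] (g : α → ℝ) (hgm : Measurable g)
    (hg : ∀ z, 0 ≤ g z) (δ : ℝ) (hδ : 0 < δ) :
    ∃ (C : Option ℤ → Set α) (v : Option ℤ → ℝ),
      (∀ k, MeasurableSet (C k)) ∧
      Pairwise (Function.onFun Disjoint C) ∧
      (∀ z, ∃ k, z ∈ C k) ∧
      (∀ k, 0 ≤ v k) ∧
      (∀ k, ∀ z ∈ C k, v k ^ 2 ≤ g z ^ 2 ∧ g z ^ 2 ≤ (1 + δ) * v k ^ 2) := by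
  have hb : (1 : ℝ) < 1 + δ := by linarith
  have hb0 : (0 : ℝ) < 1 + δ := by linarith
  refine ⟨fun k => Option.elim k {z | g z = 0}
      (fun k => {z | (1+δ)^k ≤ g z ^ 2 ∧ g z ^ 2 < (1+δ)^(k+1)}),
    fun k => Option.elim k 0 (fun k => Real.sqrt ((1+δ)^k)), ?_, ?_, ?_, ?_, ?_⟩
  · rintro (_|k)
    · exact hgm (measurableSet_singleton 0)
    · exact ((measurableSet_le measurable_const (hgm.pow_const 2)).inter
        (measurableSet_lt (hgm.pow_const 2) measurable_const))
  · rintro (_|k) (_|l) hkl <;> simp only [Function.onFun, Set.disjoint_left] <;>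
      rintro z hz1 hz2 <;> simp only [Option.elim, Set.mem_setOf_eq] at hz1 hz2
    · exact absurd rfl hkl
    · have h0 : g z ^ 2 = 0 := by rw [hz1]; ring
      have : (0:ℝ) < (1+δ)^l := zpow_pos hb0 l
      linarith [hz2.1]
    · have h0 : g z ^ 2 = 0 := by rw [hz2]; ring
      have : (0:ℝ) < (1+δ)^k := zpow_pos hb0 k
      linarith [hz1.1]
    · rcases lt_or_gt_of_ne (fun h : k = l => hkl (by rw [h])) with h | h
      · have h1 : (1+δ)^(k+1) ≤ (1+δ)^l := zpow_le_zpow_right₀ hb.le (by omega)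
        linarith [hz1.2, hz2.1]
      · have h1 : (1+δ)^(l+1) ≤ (1+δ)^k := zpow_le_zpow_right₀ hb.le (by omega)
        linarith [hz1.1, hz2.2]
  · intro z
    rcases eq_or_lt_of_le (hg z) with h | h
    · exact ⟨none, h.symm⟩
    · have hx : (0:ℝ) < g z ^ 2 := by positivity
      obtain ⟨k, hk⟩ := exists_mem_Ico_zpow hx hb
      exact ⟨some k, hk.1, hk.2⟩
  · rintro (_|k)
    · exact le_refl 0
    · exact Real.sqrt_nonneg _
  · rintro (_|k) z hz <;> simp only [Option.elim] at *
    · have h0 : g z = 0 := hz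
      constructor <;> nlinarith
    · have hsq : Real.sqrt ((1+δ)^k) ^ 2 = (1+δ)^k :=
        Real.sq_sqrt (le_of_lt (zpow_pos hb0 k))
      rw [hsq]
      refine ⟨hz.1, ?_⟩
      have : (1+δ)^(k+1) = (1+δ) * (1+δ)^k := by
        rw [zpow_add_one₀ (ne_of_gt hb0)]; ring
      linarith [hz.2]

lemma small_partition (d : ℕ) (Z : Set (Fin d → ℝ)) (hZ : MeasurableSet Z)
    (μ : Measure Z) [IsProbabilityMeasure μ] (δ : ℝ) (hδ : 0 < δ) :
    ∃ (J : Type) (_ : Countable J) (P : J → Set Z),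
      Pairwise (Function.onFun Disjoint P) ∧ (∀ j, MeasurableSet (P j)) ∧
      (⋃ j, P j) = Set.univ ∧
      ∀ j, (μ (P j) ≤ ENNReal.ofReal δ ∧ ∀ z ∈ P j, μ {z} = 0) ∨ ∃ z, P j = {z} := by
  by_cases hc : Countable Z
  · refine ⟨Z, inferInstance, fun z => {z}, ?_, fun z => measurableSet_singleton z, ?_, ?_⟩
    · intro a b hab
      simpa [Function.onFun] using hab
    · exact Set.iUnion_of_singleton _
    · exact fun z => Or.inr ⟨z, rfl⟩
  -- uncountable case
  · have hcα : ¬Countable (Fin d → ℝ) := fun h => hc inferInstance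
    have hcR : ¬Countable ℝ := not_countable
    let e : (Fin d → ℝ) ≃ᵐ ℝ := PolishSpace.measurableEquivOfNotCountable hcα hcR
    set φ : Z → ℝ := fun z => e (z : Fin d → ℝ) with hφdef
    have hφm : Measurable φ := e.measurable.comp measurable_subtype_coe
    have hφi : Function.Injective φ := fun a b h =>
      Subtype.val_injective (e.injective h)
    set A : Set Z := {z | μ {z} ≠ 0} with hAdef
    have hA : A.Countable := by
      have h := MeasureTheory.Measure.countable_meas_pos_of_disjoint_iUnion
        (μ := μ) (As := fun z : Z => {z}) (fun z => measurableSet_singleton z)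
        (fun a b hab => by simpa [Function.onFun] using hab)
      refine h.mono ?_
      intro z hz
      exact pos_iff_ne_zero.mpr hz
    have hAm : MeasurableSet A := hA.measurableSet
    set ν : Measure ℝ := Measure.map φ (μ.restrict Aᶜ) with hνdef
    have hν_apply : ∀ s : Set ℝ, MeasurableSet s → ν s = μ (φ ⁻¹' s ∩ Aᶜ) := by
      intro s hs
      rw [hνdef, Measure.map_apply hφm hs, Measure.restrict_apply (hφm hs)]
    have hν_fin : ∀ s : Set ℝ, ν s ≤ 1 := by
      intro s
      refine le_trans (measure_mono (Set.subset_univ s)) ?_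
      rw [hνdef, Measure.map_apply hφm MeasurableSet.univ, Set.preimage_univ,
        Measure.restrict_apply MeasurableSet.univ]
      exact le_trans (measure_mono (Set.subset_univ _)) measure_univ.le
    have hν_atom : ∀ x : ℝ, ν {x} = 0 := by
      intro x
      rw [hν_apply {x} (measurableSet_singleton x)]
      have hsub : (φ ⁻¹' {x}).Subsingleton := fun a ha b hb => hφi (ha.trans hb.symm)
      rcases hsub.eq_empty_or_singleton with h | ⟨z, h⟩
      · rw [h]; simp
      · rw [h]
        by_cases hz : z ∈ A
        · have : ({z} : Set Z) ∩ Aᶜ = ∅ := by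
            ext w; simp only [Set.mem_inter_iff, Set.mem_singleton_iff, Set.mem_compl_iff,
              Set.mem_empty_iff_false, iff_false]
            rintro ⟨rfl, hw⟩; exact hw hz
          rw [this]; simp
        · refine le_antisymm ?_ (zero_le)
          refine le_trans (measure_mono (Set.inter_subset_left)) ?_
          exact le_of_eq (not_ne_iff.mp hz)
    set f : ℝ → ℝ := fun t => (ν (Set.Iic t)).toReal with hfdef
    have hfin : ∀ t, ν (Set.Iic t) ≠ ⊤ := fun t => ne_top_of_le_ne_top ENNReal.one_ne_top (hν_fin _)
    have hIic : ∀ t, ν (Set.Iic t) = ENNReal.ofReal (f t) := fun t =>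
      (ENNReal.ofReal_toReal (hfin t)).symm
    have hfmono : Monotone f := fun s t h =>
      ENNReal.toReal_mono (hfin t) (measure_mono (Set.Iic_subset_Iic.mpr h))
    have hf0 : ∀ t, 0 ≤ f t := fun t => ENNReal.toReal_nonneg
    set T : ℕ → Set ℝ := fun k => f ⁻¹' (Set.Ico (k*δ) ((k+1)*δ)) with hTdef
    have hTm : ∀ k, MeasurableSet (T k) := fun k =>
      hfmono.measurable measurableSet_Ico
    have hTmem : ∀ k t, t ∈ T k ↔ (k*δ ≤ f t ∧ f t < (k+1)*δ) := by
      intro k t; rfl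
    have hTdisj : Pairwise (Function.onFun Disjoint T) := by
      intro k l hkl
      simp only [Function.onFun, Set.disjoint_left]
      intro t ht1 ht2
      rw [hTmem] at ht1 ht2
      rcases lt_or_gt_of_ne hkl with h | h
      · have : ((k:ℝ)+1) ≤ l := by exact_mod_cast h
        nlinarith [ht1.2, ht2.1]
      · have : ((l:ℝ)+1) ≤ k := by exact_mod_cast h
        nlinarith [ht2.2, ht1.1]
    have hTcover : ∀ t, ∃ k, t ∈ T k := by
      intro t
      refine ⟨⌊f t / δ⌋₊, ?_, ?_⟩
      · rw [← le_div_iff₀ hδ]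
        exact Nat.floor_le (div_nonneg (hf0 t) hδ.le)
      · rw [← div_lt_iff₀ hδ]
        exact Nat.lt_floor_add_one _
    -- key bound
    have hTbound : ∀ k, ν (T k) ≤ ENNReal.ofReal δ := by
      intro k
      rcases Set.eq_empty_or_nonempty (T k) with h | ⟨t₀, ht₀⟩
      · rw [h]; simp
      set S : ℕ → Set ℝ := fun n => T k ∩ Set.Icc (t₀ - n) (t₀ + n) with hSdef
      have hSmono : Monotone S := by
        intro n m hnm
        refine Set.inter_subset_inter_right _ (Set.Icc_subset_Icc ?_ ?_)
        · have : (n:ℝ) ≤ m := by exact_mod_cast hnm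
          linarith
        · have : (n:ℝ) ≤ m := by exact_mod_cast hnm
          linarith
      have hSU : T k = ⋃ n, S n := by
        ext t
        simp only [Set.mem_iUnion, hSdef, Set.mem_inter_iff, Set.mem_Icc]
        constructor
        · intro ht
          obtain ⟨n, hn⟩ := exists_nat_ge (|t - t₀|)
          rw [abs_le] at hn
          exact ⟨n, ht, by linarith [hn.1], by linarith [hn.2]⟩
        · rintro ⟨n, hn, _⟩; exact hn
      rw [hSU, hSmono.measure_iUnion]
      refine iSup_le fun n => ?_
      have hSne : (S n).Nonempty := ⟨t₀, ht₀, by constructor <;> [linarith [Nat.cast_nonneg (α:=ℝ) n]; linarith [Nat.cast_nonneg (α:=ℝ) n]]⟩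
      have hSbd_b : BddBelow (S n) := ⟨t₀ - n, fun t ht => ht.2.1⟩
      have hSbd_a : BddAbove (S n) := ⟨t₀ + n, fun t ht => ht.2.2⟩
      set i := sInf (S n)
      set s := sSup (S n)
      have his : i ≤ s := le_trans (csInf_le hSbd_b hSne.choose_spec) (le_csSup hSbd_a hSne.choose_spec)
      have hL : ENNReal.ofReal (k*δ) ≤ ν (Set.Iic i) := by
        obtain ⟨v, hvanti, hvtend, hvmem⟩ := exists_seq_tendsto_sInf hSne hSbd_b
        have hIiceq : Set.Iic i = ⋂ m, Set.Iic (v m) := by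
          ext t
          simp only [Set.mem_Iic, Set.mem_iInter]
          constructor
          · intro ht m
            exact le_trans ht (csInf_le hSbd_b (hvmem m))
          · intro ht
            exact ge_of_tendsto hvtend (Filter.Eventually.of_forall ht)
        rw [hIiceq, Directed.measure_iInter
          (fun m => (measurableSet_Iic).nullMeasurableSet)
          (fun a b => ⟨max a b, Set.Iic_subset_Iic.mpr (hvanti (le_max_left a b)),
            Set.Iic_subset_Iic.mpr (hvanti (le_max_right a b))⟩)
          ⟨0, hfin _⟩]
        refine le_iInf fun m => ?_
        rw [hIic]
        refine ENNReal.ofReal_le_ofReal ?_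
        exact ((hvmem m).1 : v m ∈ T k).1
      have hU : ν (Set.Iic s) ≤ ENNReal.ofReal ((k+1)*δ) := by
        obtain ⟨u, humono, hutend, humem⟩ := exists_seq_tendsto_sSup hSne hSbd_a
        have h2 : Set.Iio s ⊆ ⋃ m, Set.Iic (u m) := by
          intro t ht
          have : ∃ m, t < u m := by
            by_contra hcon
            push_neg at hcon
            have : s ≤ t := le_of_tendsto hutend (Filter.Eventually.of_forall hcon)
            exact absurd ht (not_lt.mpr this)
          obtain ⟨m, hm⟩ := this
          exact Set.mem_iUnion.mpr ⟨m, le_of_lt hm⟩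
        calc ν (Set.Iic s) ≤ ν (Set.Iio s) + ν {s} := by
              rw [← Set.Iio_union_right]; exact measure_union_le _ _
          _ = ν (Set.Iio s) := by rw [hν_atom s, add_zero]
          _ ≤ ν (⋃ m, Set.Iic (u m)) := measure_mono h2
          _ = ⨆ m, ν (Set.Iic (u m)) := Monotone.measure_iUnion
              (fun a b hab => Set.Iic_subset_Iic.mpr (humono hab))
          _ ≤ ENNReal.ofReal ((k+1)*δ) := iSup_le fun m => by
              rw [hIic]
              exact ENNReal.ofReal_le_ofReal (le_of_lt ((humem m).1.2))
      have hsub : S n ⊆ insert i (Set.Ioc i s) := by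
        intro t ht
        rcases eq_or_lt_of_le (csInf_le hSbd_b ht) with h | h
        · exact Set.mem_insert_iff.mpr (Or.inl h.symm)
        · exact Set.mem_insert_iff.mpr (Or.inr ⟨h, le_csSup hSbd_a ht⟩)
      calc ν (S n) ≤ ν (insert i (Set.Ioc i s)) := measure_mono hsub
        _ ≤ ν {i} + ν (Set.Ioc i s) := by
            rw [Set.insert_eq]; exact measure_union_le _ _
        _ = ν (Set.Ioc i s) := by rw [hν_atom i, zero_add]
        _ = ν (Set.Iic s) - ν (Set.Iic i) := by
            rw [← Set.Iic_sdiff_Iic,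
              measure_diff (Set.Iic_subset_Iic.mpr his)
                measurableSet_Iic.nullMeasurableSet (hfin i)]
        _ ≤ ENNReal.ofReal ((k+1)*δ) - ENNReal.ofReal (k*δ) := tsub_le_tsub hU hL
        _ = ENNReal.ofReal δ := by
            rw [← ENNReal.ofReal_sub _ (by positivity : (0:ℝ) ≤ k*δ)]
            congr 1; ring
    -- assemble
    have hAcnt : Countable (↥A) := hA.to_subtype
    refine ⟨(↥A) ⊕ ℕ, inferInstance,
      Sum.elim (fun a => {a.1}) (fun n => φ ⁻¹' (T n) ∩ Aᶜ), ?_, ?_, ?_, ?_⟩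
    · rintro (a|n) (b|m) hne <;> simp only [Function.onFun, Sum.elim_inl, Sum.elim_inr]
      · refine Set.disjoint_singleton.mpr ?_
        intro h
        exact hne (congrArg Sum.inl (Subtype.val_injective h))
      · rw [Set.disjoint_left]
        rintro z rfl hz
        exact hz.2 a.2
      · rw [Set.disjoint_right]
        rintro z rfl hz
        exact hz.2 b.2
      · have hnm : n ≠ m := fun h => hne (congrArg Sum.inr h)
        exact ((hTdisj hnm).preimage φ).mono Set.inter_subset_left Set.inter_subset_left
    · rintro (a|n)
      · exact measurableSet_singleton _
      · exact (hφm (hTm n)).inter hAm.compl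
    · rw [Set.eq_univ_iff_forall]
      intro z
      by_cases hz : z ∈ A
      · exact Set.mem_iUnion.mpr ⟨Sum.inl ⟨z, hz⟩, rfl⟩
      · obtain ⟨k, hk⟩ := hTcover (φ z)
        exact Set.mem_iUnion.mpr ⟨Sum.inr k, hk, hz⟩
    · rintro (a|n)
      · exact Or.inr ⟨a.1, rfl⟩
      · refine Or.inl ⟨?_, fun z hz => not_ne_iff.mp hz.2⟩
        rw [Sum.elim_inr, ← hν_apply (T n) (hTm n)]
        exact hTbound n

/-- Lemma 1: discretization/partition lemma. -/
theorem partition_lemma (d : ℕ) (Z : Set (Fin d → ℝ)) (hZ : MeasurableSet Z)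
    (μ : Measure Z) [IsProbabilityMeasure μ]
    (Rmax ρ : Z → ℝ) (hRm : Measurable Rmax) (hρm : Measurable ρ)
    (hRnn : ∀ z, 0 ≤ Rmax z) (hρnn : ∀ z, 0 ≤ ρ z)
    (γ : ℝ) (hγ : γ ∈ Set.Icc (0 : ℝ) 1) (δ : ℝ) (hδ : δ ∈ Set.Ioc (0 : ℝ) 1) :
    ∃ (I : Type) (_ : Countable I) (B : I → Set Z) (R ρi : I → ℝ) (ξ : I → Bool),
      Pairwise (Function.onFun Disjoint B) ∧
      (∀ i, MeasurableSet (B i)) ∧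
      (⋃ i, B i) = Set.univ ∧
      (∀ i, 0 ≤ R i ∧ 0 ≤ ρi i) ∧
      (∀ i, ∀ z ∈ B i,
        (R i ^ 2 ≤ Rmax z ^ 2 ∧ Rmax z ^ 2 ≤ (1 + δ) * R i ^ 2) ∧
        (ρi i ^ 2 ≤ ρ z ^ 2 ∧ ρ z ^ 2 ≤ (1 + δ) * ρi i ^ 2) ∧
        ((μ {z} ≤ ENNReal.ofReal γ) ↔ ξ i = true)) ∧
      (∀ i, μ (B i) ≤ ENNReal.ofReal δ ∨ ∃ z, B i = {z}) := by
  obtain ⟨hδ0, hδ1⟩ := hδ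
  obtain ⟨J, hJc, P, hPdisj, hPm, hPU, hPprop⟩ := small_partition d Z hZ μ δ hδ0
  obtain ⟨Cr, vR, hCrm, hCrdisj, hCrcov, hvRnn, hCrprop⟩ := level_cells Rmax hRm hRnn δ hδ0
  obtain ⟨Cρ, vρ, hCρm, hCρdisj, hCρcov, hvρnn, hCρprop⟩ := level_cells ρ hρm hρnn δ hδ0
  haveI := hJc
  refine ⟨J × Option ℤ × Option ℤ, inferInstance,
    fun i => (P i.1 ∩ Cr i.2.1) ∩ Cρ i.2.2,
    fun i => vR i.2.1, fun i => vρ i.2.2,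
    fun i => if h : ∃ z₀, P i.1 = {z₀} then decide (μ {h.choose} ≤ ENNReal.ofReal γ)
      else true,
    ?_, ?_, ?_, ?_, ?_, ?_⟩
  · rintro ⟨j, k, l⟩ ⟨j', k', l'⟩ hne
    simp only [Function.onFun]
    by_cases hj : j = j'
    · subst hj
      by_cases hk : k = k'
      · subst hk
        have hl : l ≠ l' := fun h => hne (by rw [h])
        exact (hCρdisj hl).mono Set.inter_subset_right Set.inter_subset_right
      · exact (hCrdisj hk).mono
          (Set.inter_subset_left.trans Set.inter_subset_right)
          (Set.inter_subset_left.trans Set.inter_subset_right)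
    · exact (hPdisj hj).mono
        (Set.inter_subset_left.trans Set.inter_subset_left)
        (Set.inter_subset_left.trans Set.inter_subset_left)
  · rintro ⟨j, k, l⟩
    exact ((hPm j).inter (hCrm k)).inter (hCρm l)
  · rw [Set.eq_univ_iff_forall]
    intro z
    have hzP : z ∈ ⋃ j, P j := hPU.symm ▸ Set.mem_univ z
    obtain ⟨j, hj⟩ := Set.mem_iUnion.mp hzP
    obtain ⟨k, hk⟩ := hCrcov z
    obtain ⟨l, hl⟩ := hCρcov z
    exact Set.mem_iUnion.mpr ⟨⟨j, k, l⟩, ⟨hj, hk⟩, hl⟩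
  · rintro ⟨j, k, l⟩
    exact ⟨hvRnn k, hvρnn l⟩
  · rintro ⟨j, k, l⟩ z ⟨⟨hzP, hzr⟩, hzρ⟩
    refine ⟨hCrprop k z hzr, hCρprop l z hzρ, ?_⟩
    simp only []
    split_ifs with h
    · have hz0 : z = h.choose := by
        have hs := h.choose_spec
        rw [hs] at hzP
        exact hzP
      subst hz0
      simp only [decide_eq_true_eq]
    · simp only [decide_eq_true_eq]
      rcases hPprop j with ⟨_, hzero⟩ | hsing
      · simp only [hzero z hzP, zero_le, true_iff]
      · exact absurd hsing h
  · rintro ⟨j, k, l⟩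
    show μ ((P j ∩ Cr k) ∩ Cρ l) ≤ ENNReal.ofReal δ ∨ ∃ z, (P j ∩ Cr k) ∩ Cρ l = {z}
    rcases hPprop j with ⟨hle, _⟩ | ⟨z₀, hz₀⟩
    · exact Or.inl (le_trans (measure_mono
        (Set.inter_subset_left.trans Set.inter_subset_left)) hle)
    · rcases Set.eq_empty_or_nonempty ((P j ∩ Cr k) ∩ Cρ l) with hB | ⟨w, hw⟩
      · refine Or.inl ?_
        rw [hB]
        simp
      · refine Or.inr ⟨z₀, subset_antisymm ?_ ?_⟩
        · intro t ht
          have : t ∈ P j := ht.1.1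
          rw [hz₀] at this
          exact this
        · have hwz : w = z₀ := by
            have : w ∈ P j := hw.1.1
            rw [hz₀] at this
            exact this
          intro t ht
          rw [Set.mem_singleton_iff.mp ht, ← hwz]
          exact hw
end
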